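/- arXiv:2206.07452 — 13 statements merged into one kernel-verified Lean document; each statement's English description precedes it below -/
import Mathlib

section
/- Let (A, μ, α, β) be a left BiHom-alternative algebra and (V, ℓ, r, φ, ψ) a representation of it. Then the coboundary operators are well defined on cochains: for every 1-cochain f, δ¹f(α(x),α(y)) = φ(δ¹f(x,y)) and δ¹f(β(x),β(y)) = ψ(δ¹f(x,y)); for every 2-cochain f, δ²f(α(x),α(y),α(z)) = φ(δ²f(x,y,z)) and δ²f(β(x),β(y),β(z)) = ψ(δ²f(x,y,z)); and for every 3-cochain f, δ³f(α(x₁),α(x₂),α(x₃),α(x₄)) = φ(δ³f(x₁,x₂,x₃,x₄)) and δ³f(β(x₁),β(x₂),β(x₃),β(x₄)) = ψ(δ³f(x₁,x₂,x₃,x₄)). -/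
/-- The BiHom-associator `as_{α,β}(x,y,z) = (xy)β(z) − α(x)(yz)`. -/
def biAssoc {A : Type*} [AddCommGroup A] (mul : A → A → A) (α β : A → A)
    (x y z : A) : A :=
  mul (mul x y) (β z) - mul (α x) (mul y z)

/-- A BiHom-algebra `(A, μ, α, β)`. -/
structure IsBiHomAlg (K : Type*) {A : Type*} [Field K] [AddCommGroup A] [Module K A]
    (mul : A → A → A) (α β : A → A) : Prop where
  mul_lin_left : ∀ y, IsLinearMap K fun x => mul x y
  mul_lin_right : ∀ x, IsLinearMap K (mul x)
  alpha_lin : IsLinearMap K α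
  beta_lin : IsLinearMap K β
  alpha_beta_comm : ∀ x, α (β x) = β (α x)
  alpha_mul : ∀ x y, α (mul x y) = mul (α x) (α y)
  beta_mul : ∀ x y, β (mul x y) = mul (β x) (β y)

/-- A left BiHom-alternative algebra. -/
structure IsLeftBiHomAlt (K : Type*) {A : Type*} [Field K] [AddCommGroup A] [Module K A]
    (mul : A → A → A) (α β : A → A) extends IsBiHomAlg K mul α β : Prop where
  left_alt : ∀ x y z,
    biAssoc mul α β (β x) (α y) z + biAssoc mul α β (β y) (α x) z = 0

/-- A representation (bimodule) `(V, ℓ, r, φ, ψ)` of a BiHom-alternative algebra. -/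
structure IsBiHomRep (K : Type*) {A V : Type*} [Field K] [AddCommGroup A] [Module K A]
    [AddCommGroup V] [Module K V] (mul : A → A → A) (α β : A → A)
    (l r : A → Module.End K V) (φ ψ : Module.End K V) : Prop where
  l_lin : IsLinearMap K l
  r_lin : IsLinearMap K r
  phi_psi_comm : ∀ v, φ (ψ v) = ψ (φ v)
  phi_l : ∀ x v, φ (l x v) = l (α x) (φ v)
  phi_r : ∀ x v, φ (r x v) = r (α x) (φ v)
  psi_l : ∀ x v, ψ (l x v) = l (β x) (ψ v)
  psi_r : ∀ x v, ψ (r x v) = r (β x) (ψ v)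
  rep1 : ∀ x v, l (mul (β x) (α x)) (ψ v) = l (α (β x)) (l (α x) v)
  rep2 : ∀ x v, r (mul (β x) (α x)) (φ v) = r (α (β x)) (r (β x) v)
  rep3 : ∀ x y v, r (β y) (l (β x) (φ v)) - l (α (β x)) (r y (φ v))
      = r (mul (α x) y) (φ (ψ v)) - r (β y) (r (α x) (ψ v))
  rep4 : ∀ x y v, l (α y) (r (α x) (ψ v)) - r (α (β x)) (l y (ψ v))
      = l (mul y (β x)) (φ (ψ v)) - l (α y) (l (β x) (φ v))

/-- A 1-cochain on `A` with values in `V`. -/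
structure IsCochain1 (K : Type*) {A V : Type*} [Field K] [AddCommGroup A] [Module K A]
    [AddCommGroup V] [Module K V] (α β : A → A) (φ ψ : Module.End K V)
    (f : A → V) : Prop where
  lin : IsLinearMap K f
  equiv_a : ∀ x, f (α x) = φ (f x)
  equiv_b : ∀ x, f (β x) = ψ (f x)

/-- A 2-cochain on `A` with values in `V`. -/
structure IsCochain2 (K : Type*) {A V : Type*} [Field K] [AddCommGroup A] [Module K A]
    [AddCommGroup V] [Module K V] (α β : A → A) (φ ψ : Module.End K V)
    (f : A → A → V) : Prop where
  lin_left : ∀ y, IsLinearMap K fun x => f x y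
  lin_right : ∀ x, IsLinearMap K (f x)
  equiv_a : ∀ x y, f (α x) (α y) = φ (f x y)
  equiv_b : ∀ x y, f (β x) (β y) = ψ (f x y)

/-- A 3-cochain on `A` with values in `V`. -/
structure IsCochain3 (K : Type*) {A V : Type*} [Field K] [AddCommGroup A] [Module K A]
    [AddCommGroup V] [Module K V] (α β : A → A) (φ ψ : Module.End K V)
    (f : A → A → A → V) : Prop where
  lin1 : ∀ y z, IsLinearMap K fun x => f x y z
  lin2 : ∀ x z, IsLinearMap K fun y => f x y z
  lin3 : ∀ x y, IsLinearMap K (f x y)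
  equiv_a : ∀ x y z, f (α x) (α y) (α z) = φ (f x y z)
  equiv_b : ∀ x y z, f (β x) (β y) (β z) = ψ (f x y z)

/-- The first coboundary operator `δ¹f(x,y) = ℓ(x)f(y) + r(y)f(x) − f(xy)`. -/
def delta1 {K A V : Type*} [Field K] [AddCommGroup A] [Module K A]
    [AddCommGroup V] [Module K V] (mul : A → A → A)
    (l r : A → Module.End K V) (f : A → V) (x y : A) : V :=
  l x (f y) + r y (f x) - f (mul x y)

/-- The second coboundary operator. -/
def delta2 {K A V : Type*} [Field K] [AddCommGroup A] [Module K A]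
    [AddCommGroup V] [Module K V] (mul : A → A → A) (α β : A → A)
    (l r : A → Module.End K V) (f : A → A → V) (x y z : A) : V :=
  r (β z) (f (β x) (α y)) - l (α (β x)) (f (α y) z)
    + r (β z) (f (β y) (α x)) - l (α (β y)) (f (α x) z)
    + f (mul (β x) (α y)) (β z) - f (α (β x)) (mul (α y) z)
    + f (mul (β y) (α x)) (β z) - f (α (β y)) (mul (α x) z)

/-- The third coboundary operator. -/
def delta3 {K A V : Type*} [Field K] [AddCommGroup A] [Module K A]
    [AddCommGroup V] [Module K V] (mul : A → A → A) (α β : A → A)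
    (l r : A → Module.End K V) (f : A → A → A → V) (x1 x2 x3 x4 : A) : V :=
  l (α x1) (f (β x2) (β x3) (β x4)) - l (α x1) (f (β x3) (β x2) (β x4))
    + r (β x4) (f (α x1) (α x2) (α x3)) - r (β x4) (f (α x2) (α x1) (α x3))
    - f (mul (α x1) (β x2)) x3 x4 - f (mul (α x2) (β x3)) x1 x4
    + f x1 (mul (α x2) (β x3)) x4 + f x3 (mul (α x1) (β x2)) x4
    - f x1 x2 (mul (α x3) (β x4)) + f x2 x1 (mul (α x3) (β x4))

/-- The coboundary operators are well defined on cochains: `δⁿ` of an `n`-cochain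
satisfies the `(n+1)`-cochain equivariance conditions, for `n = 1, 2, 3`. -/
theorem coboundary_well_defined
    (K : Type*) [Field K] [CharZero K] {A V : Type*} [AddCommGroup A] [Module K A]
    [AddCommGroup V] [Module K V]
    (mul : A → A → A) (α β : A → A) (halg : IsLeftBiHomAlt K mul α β)
    (l r : A → Module.End K V) (φ ψ : Module.End K V)
    (hrep : IsBiHomRep K mul α β l r φ ψ) :
    (∀ f : A → V, IsCochain1 K α β φ ψ f →
      (∀ x y, delta1 mul l r f (α x) (α y) = φ (delta1 mul l r f x y)) ∧
      (∀ x y, delta1 mul l r f (β x) (β y) = ψ (delta1 mul l r f x y))) ∧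
    (∀ f : A → A → V, IsCochain2 K α β φ ψ f →
      (∀ x y z, delta2 mul α β l r f (α x) (α y) (α z) = φ (delta2 mul α β l r f x y z)) ∧
      (∀ x y z, delta2 mul α β l r f (β x) (β y) (β z) = ψ (delta2 mul α β l r f x y z))) ∧
    (∀ f : A → A → A → V, IsCochain3 K α β φ ψ f →
      (∀ x1 x2 x3 x4, delta3 mul α β l r f (α x1) (α x2) (α x3) (α x4)
          = φ (delta3 mul α β l r f x1 x2 x3 x4)) ∧
      (∀ x1 x2 x3 x4, delta3 mul α β l r f (β x1) (β x2) (β x3) (β x4)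
          = ψ (delta3 mul α β l r f x1 x2 x3 x4))) := by
  refine ⟨fun f hf => ⟨fun x y => ?_, fun x y => ?_⟩,
    fun f hf => ⟨fun x y z => ?_, fun x y z => ?_⟩,
    fun f hf => ⟨fun x1 x2 x3 x4 => ?_, fun x1 x2 x3 x4 => ?_⟩⟩
  · simp only [delta1, map_add, map_sub, hrep.phi_l, hrep.phi_r, hf.equiv_a,
      ← halg.alpha_mul]
  · simp only [delta1, map_add, map_sub, hrep.psi_l, hrep.psi_r, hf.equiv_b,
      ← halg.beta_mul]
  · simp only [delta2, map_add, map_sub, ← halg.alpha_beta_comm, ← halg.alpha_mul,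
      hf.equiv_a, hrep.phi_l, hrep.phi_r]
  · simp only [delta2, map_add, map_sub, halg.alpha_beta_comm, ← halg.beta_mul,
      hf.equiv_b, hrep.psi_l, hrep.psi_r]
  · simp only [delta3, map_add, map_sub, ← halg.alpha_beta_comm, ← halg.alpha_mul,
      hf.equiv_a, hrep.phi_l, hrep.phi_r]
  · simp only [delta3, map_add, map_sub, halg.alpha_beta_comm, ← halg.beta_mul,
      hf.equiv_b, hrep.psi_l, hrep.psi_r]
end

section
/- Let (A, μ, α, β) be a left BiHom-alternative algebra and (d_i)_{i≥0} a formal deformation of it. Let p ≥ 1 and suppose d_i = 0 for all 1 ≤ i ≤ p−1. Then d_p is a 2-cocycle with coefficients in the adjoint representation: δ²d_p = 0, i.e. for all x, y, z ∈ A, d_p(β(x),α(y))·β(z) − αβ(x)·d_p(α(y),z) + d_p(β(y),α(x))·β(z) − αβ(y)·d_p(α(x),z) + d_p(β(x)α(y),β(z)) − d_p(αβ(x),α(y)z) + d_p(β(y)α(x),β(z)) − d_p(αβ(y),α(x)z) = 0. -/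
/-- The `⋄` operation on bilinear maps:
`d ⋄ d'(x,y,z) = d(d'(β(x),α(y)),β(z)) − d(αβ(x),d'(α(y),z))
 + d(d'(β(y),α(x)),β(z)) − d(αβ(y),d'(α(x),z))`. -/
def diamond {A : Type*} [AddCommGroup A] (α β : A → A) (d d' : A → A → A)
    (x y z : A) : A :=
  d (d' (β x) (α y)) (β z) - d (α (β x)) (d' (α y) z)
    + d (d' (β y) (α x)) (β z) - d (α (β y)) (d' (α x) z)

/-- A one-parameter formal deformation of a left BiHom-alternative algebra
`(A, μ, α, β)`: a sequence of bilinear maps `d_i` with `d₀ = μ`, commuting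
appropriately with `α` and `β`, and satisfying the deformation equations
`Σ_{i+j=k} d_i ⋄ d_j = 0` for every `k`. -/
structure IsFormalDeformation (K : Type*) {A : Type*} [Field K] [AddCommGroup A]
    [Module K A] (mul : A → A → A) (α β : A → A) (d : ℕ → A → A → A) : Prop where
  d_zero : d 0 = mul
  lin_left : ∀ i y, IsLinearMap K fun x => d i x y
  lin_right : ∀ i x, IsLinearMap K (d i x)
  equiv_a : ∀ i x y, d i (α x) (α y) = α (d i x y)
  equiv_b : ∀ i x y, d i (β x) (β y) = β (d i x y)
  deform_eq : ∀ k x y z,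
    ∑ p ∈ Finset.HasAntidiagonal.antidiagonal k, diamond α β (d p.1) (d p.2) x y z = 0

/-- The second coboundary operator with coefficients in the adjoint representation. -/
def delta2adj {A : Type*} [AddCommGroup A] (mul : A → A → A) (α β : A → A)
    (g : A → A → A) (x y z : A) : A :=
  mul (g (β x) (α y)) (β z) - mul (α (β x)) (g (α y) z)
    + mul (g (β y) (α x)) (β z) - mul (α (β y)) (g (α x) z)
    + g (mul (β x) (α y)) (β z) - g (α (β x)) (mul (α y) z)
    + g (mul (β y) (α x)) (β z) - g (α (β y)) (mul (α x) z)

/-- The third coboundary operator with coefficients in the adjoint representation. -/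
def delta3adj {A : Type*} [AddCommGroup A] (mul : A → A → A) (α β : A → A)
    (f : A → A → A → A) (x1 x2 x3 x4 : A) : A :=
  mul (α x1) (f (β x2) (β x3) (β x4)) - mul (α x1) (f (β x3) (β x2) (β x4))
    + mul (f (α x1) (α x2) (α x3)) (β x4) - mul (f (α x2) (α x1) (α x3)) (β x4)
    - f (mul (α x1) (β x2)) x3 x4 - f (mul (α x2) (β x3)) x1 x4
    + f x1 (mul (α x2) (β x3)) x4 + f x3 (mul (α x1) (β x2)) x4
    - f x1 x2 (mul (α x3) (β x4)) + f x2 x1 (mul (α x3) (β x4))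

/-- A 2-cochain with coefficients in the adjoint representation. -/
structure IsAdjCochain2 (K : Type*) {A : Type*} [Field K] [AddCommGroup A] [Module K A]
    (α β : A → A) (g : A → A → A) : Prop where
  lin_left : ∀ y, IsLinearMap K fun x => g x y
  lin_right : ∀ x, IsLinearMap K (g x)
  equiv_a : ∀ x y, g (α x) (α y) = α (g x y)
  equiv_b : ∀ x y, g (β x) (β y) = β (g x y)

/-- A 3-cochain with coefficients in the adjoint representation. -/
structure IsAdjCochain3 (K : Type*) {A : Type*} [Field K] [AddCommGroup A] [Module K A]
    (α β : A → A) (g : A → A → A → A) : Prop where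
  lin1 : ∀ y z, IsLinearMap K fun x => g x y z
  lin2 : ∀ x z, IsLinearMap K fun y => g x y z
  lin3 : ∀ x y, IsLinearMap K (g x y)
  equiv_a : ∀ x y z, g (α x) (α y) (α z) = α (g x y z)
  equiv_b : ∀ x y z, g (β x) (β y) (β z) = β (g x y z)

/-- If `(d_i)` is a formal deformation of a left BiHom-alternative algebra and
`d_i = 0` for `1 ≤ i ≤ p−1`, then `d_p` is a 2-cocycle with coefficients in the
adjoint representation: `δ²d_p = 0`. -/
theorem infinitesimal_is_two_cocycle
    (K : Type*) [Field K] [CharZero K] {A : Type*} [AddCommGroup A] [Module K A]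
    (mul : A → A → A) (α β : A → A) (halg : IsLeftBiHomAlt K mul α β)
    (d : ℕ → A → A → A) (hd : IsFormalDeformation K mul α β d)
    (p : ℕ) (hp : 1 ≤ p) (hvanish : ∀ i, 1 ≤ i → i ≤ p - 1 → ∀ x y, d i x y = 0) :
    ∀ x y z, delta2adj mul α β (d p) x y z = 0 := by
  intro x y z
  have heq := hd.deform_eq p x y z
  rw [Finset.Nat.sum_antidiagonal_eq_sum_range_succ_mk] at heq
  set f : ℕ → A := fun i => diamond α β (d i) (d (p - i)) x y z with hf
  have hzero : ∀ i ∈ Finset.range (p + 1), i ∉ ({0, p} : Finset ℕ) → f i = 0 := by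
    intro i hi hni
    simp only [Finset.mem_insert, Finset.mem_singleton, not_or] at hni
    simp only [Finset.mem_range] at hi
    have hdi : ∀ a b, d i a b = 0 := fun a b =>
      hvanish i (Nat.one_le_iff_ne_zero.mpr hni.1) (by omega) a b
    simp [hf, diamond, hdi]
  have hsub : ({0, p} : Finset ℕ) ⊆ Finset.range (p + 1) := by
    intro i hi
    simp only [Finset.mem_insert, Finset.mem_singleton] at hi
    rcases hi with h | h <;> simp [h, Nat.lt_succ_iff]
  have hsum : ∑ i ∈ ({0, p} : Finset ℕ), f i = ∑ i ∈ Finset.range (p + 1), f i :=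
    Finset.sum_subset hsub hzero
  have h0p : (0 : ℕ) ≠ p := by omega
  rw [Finset.sum_pair h0p] at hsum
  have key : f 0 + f p = 0 := by rw [hsum]; exact heq
  simp only [hf, Nat.sub_zero, Nat.sub_self, hd.d_zero] at key
  have hlz : ∀ a, d p a 0 = 0 := fun a => (hd.lin_right p a).map_zero
  simp only [diamond] at key
  simp only [delta2adj]
  rw [← key]
  abel
end

section
/- Let (A, μ, α, β) be a left BiHom-alternative algebra such that every 3-cocycle with coefficients in the adjoint representation is a 3-coboundary (i.e., for every 3-cochain g with δ³g = 0 there exists a 2-cochain h with δ²h = g). Then every 2-cocycle is integrable: for every 2-cochain d with δ²d = 0 there exists a formal deformation (d_i)_{i≥0} of (A, μ, α, β) with d₀ = μ and d₁ = d. -/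
/- ===================== Auxiliary material ===================== -/

section ObstructionAux

variable {K : Type*} [Field K] {A : Type*} [AddCommGroup A] [Module K A]

lemma diamond_symm2 (α β : A → A) (f h : A → A → A) (x y z : A) :
    diamond α β f h x y z = diamond α β f h y x z := by
  unfold diamond; abel

lemma delta3adj_of_symm (mul : A → A → A) (α β : A → A)
    (f : A → A → A → A) (hf : ∀ x y z, f x y z = f y x z) (x1 x2 x3 x4 : A) :
    delta3adj mul α β f x1 x2 x3 x4 = 0 := by
  unfold delta3adj
  rw [hf (β x2) (β x3) (β x4), hf (α x1) (α x2) (α x3),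
    hf (mul (α x1) (β x2)) x3 x4, hf (mul (α x2) (β x3)) x1 x4,
    hf x1 x2 (mul (α x3) (β x4))]
  abel

lemma diamond_delta2 (mul h2 : A → A → A) (α β : A → A) (x y z : A) :
    diamond α β mul h2 x y z + diamond α β h2 mul x y z
      = delta2adj mul α β h2 x y z := by
  unfold diamond delta2adj; abel

variable {α β : A → A} {f h : A → A → A}

lemma diamond_lin1 (hα : IsLinearMap K α) (hβ : IsLinearMap K β)
    (hf : IsAdjCochain2 K α β f) (hh : IsAdjCochain2 K α β h) (y z : A) :
    IsLinearMap K fun x => diamond α β f h x y z := by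
  have hfl : ∀ a a' b, f (a + a') b = f a b + f a' b := fun a a' b => (hf.lin_left b).map_add a a'
  have hfr : ∀ a b b', f a (b + b') = f a b + f a b' := fun a b b' => (hf.lin_right a).map_add b b'
  have hhl : ∀ a a' b, h (a + a') b = h a b + h a' b := fun a a' b => (hh.lin_left b).map_add a a'
  have hhr : ∀ a b b', h a (b + b') = h a b + h a b' := fun a b b' => (hh.lin_right a).map_add b b'
  have hfls : ∀ (c : K) a b, f (c • a) b = c • f a b := fun c a b => (hf.lin_left b).map_smul c a
  have hfrs : ∀ (c : K) a b, f a (c • b) = c • f a b := fun c a b => (hf.lin_right a).map_smul c b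
  have hhls : ∀ (c : K) a b, h (c • a) b = c • h a b := fun c a b => (hh.lin_left b).map_smul c a
  have hhrs : ∀ (c : K) a b, h a (c • b) = c • h a b := fun c a b => (hh.lin_right a).map_smul c b
  constructor
  · intro x x'
    show diamond α β f h (x + x') y z = diamond α β f h x y z + diamond α β f h x' y z
    simp only [diamond, hβ.map_add, hα.map_add, hfl, hfr, hhl, hhr]
    abel
  · intro c x
    show diamond α β f h (c • x) y z = c • diamond α β f h x y z
    simp only [diamond, hβ.map_smul, hα.map_smul, hfls, hfrs, hhls, hhrs, smul_sub, smul_add]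

lemma diamond_lin2 (hα : IsLinearMap K α) (hβ : IsLinearMap K β)
    (hf : IsAdjCochain2 K α β f) (hh : IsAdjCochain2 K α β h) (x z : A) :
    IsLinearMap K fun y => diamond α β f h x y z := by
  have hfl : ∀ a a' b, f (a + a') b = f a b + f a' b := fun a a' b => (hf.lin_left b).map_add a a'
  have hfr : ∀ a b b', f a (b + b') = f a b + f a b' := fun a b b' => (hf.lin_right a).map_add b b'
  have hhl : ∀ a a' b, h (a + a') b = h a b + h a' b := fun a a' b => (hh.lin_left b).map_add a a'
  have hhr : ∀ a b b', h a (b + b') = h a b + h a b' := fun a b b' => (hh.lin_right a).map_add b b'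
  have hfls : ∀ (c : K) a b, f (c • a) b = c • f a b := fun c a b => (hf.lin_left b).map_smul c a
  have hfrs : ∀ (c : K) a b, f a (c • b) = c • f a b := fun c a b => (hf.lin_right a).map_smul c b
  have hhls : ∀ (c : K) a b, h (c • a) b = c • h a b := fun c a b => (hh.lin_left b).map_smul c a
  have hhrs : ∀ (c : K) a b, h a (c • b) = c • h a b := fun c a b => (hh.lin_right a).map_smul c b
  constructor
  · intro y y'
    show diamond α β f h x (y + y') z = diamond α β f h x y z + diamond α β f h x y' z
    simp only [diamond, hβ.map_add, hα.map_add, hfl, hfr, hhl, hhr]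
    abel
  · intro c y
    show diamond α β f h x (c • y) z = c • diamond α β f h x y z
    simp only [diamond, hβ.map_smul, hα.map_smul, hfls, hfrs, hhls, hhrs, smul_sub, smul_add]

lemma diamond_lin3 (hα : IsLinearMap K α) (hβ : IsLinearMap K β)
    (hf : IsAdjCochain2 K α β f) (hh : IsAdjCochain2 K α β h) (x y : A) :
    IsLinearMap K (diamond α β f h x y) := by
  have hfl : ∀ a a' b, f (a + a') b = f a b + f a' b := fun a a' b => (hf.lin_left b).map_add a a'
  have hfr : ∀ a b b', f a (b + b') = f a b + f a b' := fun a b b' => (hf.lin_right a).map_add b b'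
  have hhl : ∀ a a' b, h (a + a') b = h a b + h a' b := fun a a' b => (hh.lin_left b).map_add a a'
  have hhr : ∀ a b b', h a (b + b') = h a b + h a b' := fun a b b' => (hh.lin_right a).map_add b b'
  have hfls : ∀ (c : K) a b, f (c • a) b = c • f a b := fun c a b => (hf.lin_left b).map_smul c a
  have hfrs : ∀ (c : K) a b, f a (c • b) = c • f a b := fun c a b => (hf.lin_right a).map_smul c b
  have hhls : ∀ (c : K) a b, h (c • a) b = c • h a b := fun c a b => (hh.lin_left b).map_smul c a
  have hhrs : ∀ (c : K) a b, h a (c • b) = c • h a b := fun c a b => (hh.lin_right a).map_smul c b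
  constructor
  · intro z z'
    show diamond α β f h x y (z + z') = diamond α β f h x y z + diamond α β f h x y z'
    simp only [diamond, hβ.map_add, hα.map_add, hfl, hfr, hhl, hhr]
    abel
  · intro c z
    show diamond α β f h x y (c • z) = c • diamond α β f h x y z
    simp only [diamond, hβ.map_smul, hα.map_smul, hfls, hfrs, hhls, hhrs, smul_sub, smul_add]

lemma diamond_equiv_a (hα : IsLinearMap K α) (hcomm : ∀ x, α (β x) = β (α x))
    (hf : IsAdjCochain2 K α β f) (hh : IsAdjCochain2 K α β h) (x y z : A) :
    diamond α β f h (α x) (α y) (α z) = α (diamond α β f h x y z) := by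
  have e1 : ∀ u, β (α u) = α (β u) := fun u => (hcomm u).symm
  have hsub : ∀ a b : A, α (a - b) = α a - α b := fun a b => by
    rw [sub_eq_add_neg, hα.map_add, hα.map_neg, ← sub_eq_add_neg]
  simp only [diamond, e1, hf.equiv_a, hh.equiv_a]
  rw [hsub, hα.map_add, hsub]

lemma diamond_equiv_b (hβ : IsLinearMap K β) (hcomm : ∀ x, α (β x) = β (α x))
    (hf : IsAdjCochain2 K α β f) (hh : IsAdjCochain2 K α β h) (x y z : A) :
    diamond α β f h (β x) (β y) (β z) = β (diamond α β f h x y z) := by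
  have hsub : ∀ a b : A, β (a - b) = β a - β b := fun a b => by
    rw [sub_eq_add_neg, hβ.map_add, hβ.map_neg, ← sub_eq_add_neg]
  simp only [diamond, hcomm, hf.equiv_b, hh.equiv_b]
  rw [hsub, hβ.map_add, hsub]

end ObstructionAux

noncomputable section SeqAux

def nextMap {A : Type*} [AddCommGroup A] (pick : (A → A → A → A) → (A → A → A))
    (α β : A → A) (v : ℕ → A → A → A) (m : ℕ) : A → A → A :=
  pick (fun x y z => -(∑ i ∈ Finset.range (m + 1), diamond α β (v (i + 1)) (v (m + 1 - i)) x y z))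

def seqMap {A : Type*} [AddCommGroup A] (pick : (A → A → A → A) → (A → A → A))
    (α β : A → A) (mul dd : A → A → A) : ℕ → ℕ → A → A → A
  | 0 => fun n => if n = 0 then mul else dd
  | (k + 1) => Function.update (seqMap pick α β mul dd k) (k + 1)
      (if k = 0 then dd else nextMap pick α β (seqMap pick α β mul dd k) (k - 1))

lemma seqMap_succ {A : Type*} [AddCommGroup A] (pick : (A → A → A → A) → (A → A → A))
    (α β : A → A) (mul dd : A → A → A) (k : ℕ) :
    seqMap pick α β mul dd (k + 1) = Function.update (seqMap pick α β mul dd k) (k + 1)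
      (if k = 0 then dd else nextMap pick α β (seqMap pick α β mul dd k) (k - 1)) := rfl

lemma seqMap_agree {A : Type*} [AddCommGroup A] (pick : (A → A → A → A) → (A → A → A))
    (α β : A → A) (mul dd : A → A → A) :
    ∀ k n, n ≤ k → seqMap pick α β mul dd k n = seqMap pick α β mul dd n n := by
  intro k
  induction k with
  | zero => intro n hn; have : n = 0 := Nat.le_zero.mp hn; subst this; rfl
  | succ k IH =>
    intro n hn
    rcases Nat.lt_or_ge n (k + 1) with hlt | hge
    · rw [seqMap_succ, Function.update_of_ne (by omega)]
      exact IH n (by omega)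
    · have : n = k + 1 := by omega
      subst this; rfl

lemma seqMap_zero' {A : Type*} [AddCommGroup A] (pick : (A → A → A → A) → (A → A → A))
    (α β : A → A) (mul dd : A → A → A) : seqMap pick α β mul dd 0 0 = mul := rfl

lemma seqMap_one {A : Type*} [AddCommGroup A] (pick : (A → A → A → A) → (A → A → A))
    (α β : A → A) (mul dd : A → A → A) : seqMap pick α β mul dd 1 1 = dd := by
  rw [seqMap_succ, Function.update_self, if_pos rfl]

lemma seqMap_two {A : Type*} [AddCommGroup A] (pick : (A → A → A → A) → (A → A → A))
    (α β : A → A) (mul dd : A → A → A) (k : ℕ) :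
    seqMap pick α β mul dd (k + 2) (k + 2)
      = pick (fun x y z => -(∑ i ∈ Finset.range (k + 1),
          diamond α β (seqMap pick α β mul dd (i + 1) (i + 1))
            (seqMap pick α β mul dd (k + 1 - i) (k + 1 - i)) x y z)) := by
  rw [seqMap_succ, Function.update_self, if_neg (Nat.succ_ne_zero k), Nat.add_sub_cancel]
  unfold nextMap
  have harg : (fun x y z => -(∑ i ∈ Finset.range (k + 1),
      diamond α β (seqMap pick α β mul dd (k + 1) (i + 1))
        (seqMap pick α β mul dd (k + 1) (k + 1 - i)) x y z))
      = (fun x y z => -(∑ i ∈ Finset.range (k + 1),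
      diamond α β (seqMap pick α β mul dd (i + 1) (i + 1))
        (seqMap pick α β mul dd (k + 1 - i) (k + 1 - i)) x y z)) := by
    funext x y z
    congr 1
    refine Finset.sum_congr rfl fun i hi => ?_
    have hi' : i < k + 1 := Finset.mem_range.mp hi
    rw [seqMap_agree pick α β mul dd (k + 1) (i + 1) (by omega),
      seqMap_agree pick α β mul dd (k + 1) (k + 1 - i) (by omega)]
  rw [harg]

end SeqAux

/-- If every 3-cocycle with coefficients in the adjoint representation is a
3-coboundary, then every 2-cocycle is integrable: it is the infinitesimal of
some formal deformation. -/
theorem two_cocycle_integrable_of_H3_trivial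
    (K : Type*) [Field K] [CharZero K] {A : Type*} [AddCommGroup A] [Module K A]
    (mul : A → A → A) (α β : A → A) (halg : IsLeftBiHomAlt K mul α β)
    (H3 : ∀ g : A → A → A → A, IsAdjCochain3 K α β g →
      (∀ x1 x2 x3 x4, delta3adj mul α β g x1 x2 x3 x4 = 0) →
      ∃ h : A → A → A, IsAdjCochain2 K α β h ∧
        ∀ x y z, delta2adj mul α β h x y z = g x y z) :
    ∀ dd : A → A → A, IsAdjCochain2 K α β dd →
      (∀ x y z, delta2adj mul α β dd x y z = 0) →
      ∃ d : ℕ → A → A → A, IsFormalDeformation K mul α β d ∧ d 1 = dd := by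
  intro dd hdd hcoc
  classical
  set P : (A → A → A → A) → (A → A → A) := fun g =>
    if hg : IsAdjCochain3 K α β g ∧ ∀ x1 x2 x3 x4, delta3adj mul α β g x1 x2 x3 x4 = 0
    then Classical.choose (H3 g hg.1 hg.2) else 0 with hPdef
  have hPspec : ∀ g, IsAdjCochain3 K α β g →
      (∀ x1 x2 x3 x4, delta3adj mul α β g x1 x2 x3 x4 = 0) →
      IsAdjCochain2 K α β (P g) ∧ ∀ x y z, delta2adj mul α β (P g) x y z = g x y z := by
    intro g hg1 hg2
    have hPg : P g = Classical.choose (H3 g hg1 hg2) := by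
      rw [hPdef]
      exact dif_pos ⟨hg1, hg2⟩
    rw [hPg]
    exact Classical.choose_spec (H3 g hg1 hg2)
  set d : ℕ → A → A → A := fun n => seqMap P α β mul dd n n with hddef
  have hd0 : d 0 = mul := rfl
  have hd1 : d 1 = dd := seqMap_one P α β mul dd
  have hd2 : ∀ k, d (k + 2) = P (fun x y z =>
      -(∑ i ∈ Finset.range (k + 1), diamond α β (d (i + 1)) (d (k + 1 - i)) x y z)) :=
    fun k => seqMap_two P α β mul dd k
  have hαl := halg.alpha_lin
  have hβl := halg.beta_lin
  have hcm := halg.alpha_beta_comm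
  have key : ∀ k, IsAdjCochain2 K α β (d k) ∧
      ∀ x y z, ∑ p ∈ Finset.HasAntidiagonal.antidiagonal k, diamond α β (d p.1) (d p.2) x y z = 0 := by
    intro k
    induction k using Nat.strong_induction_on with
    | _ k IH =>
      rcases k with _ | _ | k
      · -- k = 0
        constructor
        · rw [hd0]
          exact ⟨halg.mul_lin_left, halg.mul_lin_right,
            fun x y => (halg.alpha_mul x y).symm, fun x y => (halg.beta_mul x y).symm⟩
        · intro x y z
          rw [Finset.Nat.sum_antidiagonal_eq_sum_range_succ_mk, Finset.sum_range_one]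
          show diamond α β (d 0) (d 0) x y z = 0
          rw [hd0]
          have hA := halg.left_alt x y z
          rw [← hA]
          unfold diamond biAssoc
          abel
      · -- k = 1
        constructor
        · rw [hd1]; exact hdd
        · intro x y z
          rw [Finset.Nat.sum_antidiagonal_eq_sum_range_succ_mk, Finset.sum_range_succ,
            Finset.sum_range_one]
          show diamond α β (d 0) (d 1) x y z + diamond α β (d 1) (d 0) x y z = 0
          rw [hd0, hd1]
          have hA := hcoc x y z
          rw [← hA]
          unfold diamond delta2adj
          abel
      · -- k + 2
        have hcall : ∀ j, j < k + 2 → IsAdjCochain2 K α β (d j) := fun j hj => (IH j hj).1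
        set g : A → A → A → A := fun x y z =>
          -(∑ i ∈ Finset.range (k + 1), diamond α β (d (i + 1)) (d (k + 1 - i)) x y z)
          with hgdef
        have hc2l : ∀ i, i ∈ Finset.range (k + 1) → IsAdjCochain2 K α β (d (i + 1)) :=
          fun i hi => hcall (i + 1) (by have := Finset.mem_range.mp hi; omega)
        have hc2r : ∀ i, i ∈ Finset.range (k + 1) → IsAdjCochain2 K α β (d (k + 1 - i)) :=
          fun i _ => hcall (k + 1 - i) (by omega)
        have hgsym : ∀ x y z, g x y z = g y x z := by
          intro x y z
          show -(∑ i ∈ Finset.range (k + 1), diamond α β (d (i + 1)) (d (k + 1 - i)) x y z)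
            = -(∑ i ∈ Finset.range (k + 1), diamond α β (d (i + 1)) (d (k + 1 - i)) y x z)
          exact neg_inj.mpr (Finset.sum_congr rfl fun i _ => diamond_symm2 α β _ _ x y z)
        have hg3 : IsAdjCochain3 K α β g := by
          refine ⟨?_, ?_, ?_, ?_, ?_⟩
          · intro y z
            constructor
            · intro x x'
              show g (x + x') y z = g x y z + g x' y z
              show -(∑ i ∈ Finset.range (k + 1),
                  diamond α β (d (i + 1)) (d (k + 1 - i)) (x + x') y z) = _
              rw [Finset.sum_congr rfl fun i hi =>
                  (diamond_lin1 hαl hβl (hc2l i hi) (hc2r i hi) y z).map_add x x',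
                Finset.sum_add_distrib, neg_add]
            · intro c x
              show g (c • x) y z = c • g x y z
              show -(∑ i ∈ Finset.range (k + 1),
                  diamond α β (d (i + 1)) (d (k + 1 - i)) (c • x) y z) = _
              rw [Finset.sum_congr rfl fun i hi =>
                  (diamond_lin1 hαl hβl (hc2l i hi) (hc2r i hi) y z).map_smul c x,
                ← Finset.smul_sum, ← smul_neg]
          · intro x z
            constructor
            · intro y y'
              show g x (y + y') z = g x y z + g x y' z
              show -(∑ i ∈ Finset.range (k + 1),
                  diamond α β (d (i + 1)) (d (k + 1 - i)) x (y + y') z) = _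
              rw [Finset.sum_congr rfl fun i hi =>
                  (diamond_lin2 hαl hβl (hc2l i hi) (hc2r i hi) x z).map_add y y',
                Finset.sum_add_distrib, neg_add]
            · intro c y
              show g x (c • y) z = c • g x y z
              show -(∑ i ∈ Finset.range (k + 1),
                  diamond α β (d (i + 1)) (d (k + 1 - i)) x (c • y) z) = _
              rw [Finset.sum_congr rfl fun i hi =>
                  (diamond_lin2 hαl hβl (hc2l i hi) (hc2r i hi) x z).map_smul c y,
                ← Finset.smul_sum, ← smul_neg]
          · intro x y
            constructor
            · intro z z'
              show g x y (z + z') = g x y z + g x y z'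
              show -(∑ i ∈ Finset.range (k + 1),
                  diamond α β (d (i + 1)) (d (k + 1 - i)) x y (z + z')) = _
              rw [Finset.sum_congr rfl fun i hi =>
                  (diamond_lin3 hαl hβl (hc2l i hi) (hc2r i hi) x y).map_add z z',
                Finset.sum_add_distrib, neg_add]
            · intro c z
              show g x y (c • z) = c • g x y z
              show -(∑ i ∈ Finset.range (k + 1),
                  diamond α β (d (i + 1)) (d (k + 1 - i)) x y (c • z)) = _
              rw [Finset.sum_congr rfl fun i hi =>
                  (diamond_lin3 hαl hβl (hc2l i hi) (hc2r i hi) x y).map_smul c z,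
                ← Finset.smul_sum, ← smul_neg]
          · intro x y z
            show g (α x) (α y) (α z) = α (g x y z)
            show -(∑ i ∈ Finset.range (k + 1),
                diamond α β (d (i + 1)) (d (k + 1 - i)) (α x) (α y) (α z))
              = α (-(∑ i ∈ Finset.range (k + 1),
                diamond α β (d (i + 1)) (d (k + 1 - i)) x y z))
            have hs : α (∑ i ∈ Finset.range (k + 1),
                diamond α β (d (i + 1)) (d (k + 1 - i)) x y z)
                = ∑ i ∈ Finset.range (k + 1),
                  α (diamond α β (d (i + 1)) (d (k + 1 - i)) x y z) :=
              map_sum (IsLinearMap.mk' α hαl) _ _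
            rw [Finset.sum_congr rfl fun i hi =>
                diamond_equiv_a hαl hcm (hc2l i hi) (hc2r i hi) x y z,
              hαl.map_neg, hs]
          · intro x y z
            show g (β x) (β y) (β z) = β (g x y z)
            show -(∑ i ∈ Finset.range (k + 1),
                diamond α β (d (i + 1)) (d (k + 1 - i)) (β x) (β y) (β z))
              = β (-(∑ i ∈ Finset.range (k + 1),
                diamond α β (d (i + 1)) (d (k + 1 - i)) x y z))
            have hs : β (∑ i ∈ Finset.range (k + 1),
                diamond α β (d (i + 1)) (d (k + 1 - i)) x y z)
                = ∑ i ∈ Finset.range (k + 1),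
                  β (diamond α β (d (i + 1)) (d (k + 1 - i)) x y z) :=
              map_sum (IsLinearMap.mk' β hβl) _ _
            rw [Finset.sum_congr rfl fun i hi =>
                diamond_equiv_b hβl hcm (hc2l i hi) (hc2r i hi) x y z,
              hβl.map_neg, hs]
        have hgc : ∀ x1 x2 x3 x4, delta3adj mul α β g x1 x2 x3 x4 = 0 :=
          fun x1 x2 x3 x4 => delta3adj_of_symm mul α β g hgsym x1 x2 x3 x4
        have hdk : d (k + 2) = P g := by
          rw [hgdef]
          exact hd2 k
        obtain ⟨hP2, hPδ⟩ := hPspec g hg3 hgc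
        rw [← hdk] at hP2 hPδ
        refine ⟨hP2, ?_⟩
        intro x y z
        rw [Finset.Nat.sum_antidiagonal_eq_sum_range_succ_mk]
        have split : ∀ F : ℕ → A, ∑ i ∈ Finset.range (k + 2 + 1), F i
            = F 0 + (∑ i ∈ Finset.range (k + 1), F (i + 1)) + F (k + 2) := by
          intro F
          rw [Finset.sum_range_succ, Finset.sum_range_succ']
          abel
        rw [split fun i => diamond α β (d i) (d (k + 2 - i)) x y z]
        simp only [Nat.sub_zero, Nat.sub_self]
        have hmid : (∑ i ∈ Finset.range (k + 1),
            diamond α β (d (i + 1)) (d (k + 2 - (i + 1))) x y z) = -(g x y z) := by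
          show _ = -(-(∑ i ∈ Finset.range (k + 1),
            diamond α β (d (i + 1)) (d (k + 1 - i)) x y z))
          rw [neg_neg]
          refine Finset.sum_congr rfl fun i _ => ?_
          have : k + 2 - (i + 1) = k + 1 - i := by omega
          rw [this]
        rw [hmid, hd0]
        have hfin := hPδ x y z
        rw [← diamond_delta2 mul (d (k + 2)) α β x y z] at hfin
        rw [← hfin]
        abel
  refine ⟨d, ⟨hd0, fun i y => (key i).1.lin_left y, fun i x => (key i).1.lin_right x,
    fun i x y => (key i).1.equiv_a x y, fun i x y => (key i).1.equiv_b x y,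
    fun k x y z => (key k).2 x y z⟩, hd1⟩
end

section
/- Let (A, μ, α, β) be a left BiHom-alternative algebra and let (d_i)_{i≥0} and (d'_i)_{i≥0} be formal deformations of it which are equivalent: there exists a sequence of linear maps (φ_i)_{i≥0}, φ_i: A → A, with φ₀ = id_A, φ_i∘α = α∘φ_i and φ_i∘β = β∘φ_i for all i, and such that for all n ≥ 0 and all x, y ∈ A: Σ_{i+j=n} φ_i(d_j(x,y)) = Σ_{i+k+l=n} d'_i(φ_k(x),φ_l(y)). Then d₁ and d'₁ are cohomologous: for all x, y ∈ A, d₁(x,y) − d'₁(x,y) = x·φ₁(y) + φ₁(x)·y − φ₁(xy), i.e. d₁ − d'₁ = δ¹φ₁ with coefficients in the adjoint representation. -/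
/-- If two formal deformations of a left BiHom-alternative algebra are
equivalent, then their infinitesimals `d₁` and `d'₁` are cohomologous:
`d₁ − d'₁ = δ¹φ₁` with coefficients in the adjoint representation. -/
theorem equivalent_deformations_infinitesimals_cohomologous
    (K : Type*) [Field K] [CharZero K] {A : Type*} [AddCommGroup A] [Module K A]
    (mul : A → A → A) (α β : A → A) (halg : IsLeftBiHomAlt K mul α β)
    (d d' : ℕ → A → A → A)
    (hd : IsFormalDeformation K mul α β d) (hd' : IsFormalDeformation K mul α β d')
    (Φ : ℕ → A → A) (hΦlin : ∀ i, IsLinearMap K (Φ i)) (hΦ0 : Φ 0 = id)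
    (hΦa : ∀ i x, Φ i (α x) = α (Φ i x)) (hΦb : ∀ i x, Φ i (β x) = β (Φ i x))
    (hequiv : ∀ n x y,
      ∑ p ∈ Finset.HasAntidiagonal.antidiagonal n, Φ p.1 (d p.2 x y)
        = ∑ p ∈ Finset.HasAntidiagonal.antidiagonal n, ∑ q ∈ Finset.HasAntidiagonal.antidiagonal p.2,
            d' p.1 (Φ q.1 x) (Φ q.2 y)) :
    ∀ x y, d 1 x y - d' 1 x y
      = mul x (Φ 1 y) + mul (Φ 1 x) y - Φ 1 (mul x y) := by
  intro x y
  have h := hequiv 1 x y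
  simp [show Finset.HasAntidiagonal.antidiagonal 1 = {(0,1),(1,0)} from rfl,
    show Finset.HasAntidiagonal.antidiagonal 0 = {(0,0)} from rfl, hΦ0, hd.d_zero, hd'.d_zero] at h
  rw [show d 1 x y = mul x (Φ 1 y) + mul (Φ 1 x) y + d' 1 x y - Φ 1 (mul x y) from
    eq_sub_iff_add_eq.mpr h]
  abel
end

section
/- Let (A, μ, α, β) be a left BiHom-alternative algebra such that every 2-cocycle with coefficients in the adjoint representation is a 1-coboundary (i.e., for every 2-cochain g with δ²g = 0 there exists a linear map h: A → A commuting with α and β such that g = δ¹h). Then (A, μ, α, β) is analytically rigid: every formal deformation (d_i)_{i≥0} of (A, μ, α, β) is equivalent to the null deformation, i.e. there exists a sequence of linear maps (φ_i)_{i≥0}, φ_i: A → A, with φ₀ = id_A, φ_i∘α = α∘φ_i and φ_i∘β = β∘φ_i for all i, such that for all n ≥ 0 and all x, y ∈ A: Σ_{i+j=n} φ_i(d_j(x,y)) = Σ_{k+l=n} μ(φ_k(x),φ_l(y)). -/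
namespace RigidAux

open Finset

section Triple
variable {M : Type*} [AddCommMonoid M]

lemma tripleR1 (n : ℕ) (f : ℕ → ℕ → ℕ → M) :
    ∑ p ∈ antidiagonal n, ∑ q ∈ antidiagonal p.2, f p.1 q.1 q.2
      = ∑ p ∈ antidiagonal n, ∑ q ∈ antidiagonal p.1, f q.1 q.2 p.2 := by
  rw [Finset.sum_sigma', Finset.sum_sigma']
  apply Finset.sum_nbij' (i := fun x => ⟨(x.1.1 + x.2.1, x.2.2), (x.1.1, x.2.1)⟩)
    (j := fun x => ⟨(x.2.1, x.2.2 + x.1.2), (x.2.2, x.1.2)⟩)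
  · rintro ⟨⟨a, s⟩, ⟨b, c⟩⟩ h
    simp only [Finset.mem_sigma, Finset.HasAntidiagonal.mem_antidiagonal] at h ⊢
    exact ⟨by omega, trivial⟩
  · rintro ⟨⟨s, c⟩, ⟨a, b⟩⟩ h
    simp only [Finset.mem_sigma, Finset.HasAntidiagonal.mem_antidiagonal] at h ⊢
    exact ⟨by omega, trivial⟩
  · rintro ⟨⟨a, s⟩, ⟨b, c⟩⟩ h
    simp only [Finset.mem_sigma, Finset.HasAntidiagonal.mem_antidiagonal] at h
    obtain ⟨h1, h2⟩ := h
    subst h2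
    rfl
  · rintro ⟨⟨s, c⟩, ⟨a, b⟩⟩ h
    simp only [Finset.mem_sigma, Finset.HasAntidiagonal.mem_antidiagonal] at h
    obtain ⟨h1, h2⟩ := h
    subst h2
    rfl
  · rintro ⟨⟨a, s⟩, ⟨b, c⟩⟩ h
    rfl

lemma tripleR3 (n : ℕ) (f : ℕ → ℕ → ℕ → M) :
    ∑ p ∈ antidiagonal n, ∑ q ∈ antidiagonal p.1, f q.1 q.2 p.2
      = ∑ p ∈ antidiagonal n, ∑ q ∈ antidiagonal p.1, f q.2 q.1 p.2 := by
  refine Finset.sum_congr rfl fun p _ => ?_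
  have := Finset.Nat.sum_antidiagonal_swap (n := p.1) (f := fun q => f q.1 q.2 p.2)
  simpa using this.symm

lemma tripleR2 (n : ℕ) (f : ℕ → ℕ → ℕ → M) :
    ∑ p ∈ antidiagonal n, ∑ q ∈ antidiagonal p.1, f q.1 p.2 q.2
      = ∑ p ∈ antidiagonal n, ∑ q ∈ antidiagonal p.1, f q.1 q.2 p.2 := by
  rw [← tripleR1 n (fun a b c => f a c b), ← tripleR1 n f]
  refine Finset.sum_congr rfl fun p _ => ?_
  have := Finset.Nat.sum_antidiagonal_swap (n := p.2) (f := fun q => f p.1 q.1 q.2)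
  simpa using this

lemma iteFst (n : ℕ) (F : ℕ → M) :
    ∑ p ∈ antidiagonal n, (if p.1 = n then F p.2 else 0) = F 0 := by
  rw [Finset.sum_eq_single_of_mem (n, 0) (by simp)]
  · simp
  · rintro ⟨a, b⟩ h hne
    simp only [Finset.HasAntidiagonal.mem_antidiagonal] at h
    have : a ≠ n := by rintro rfl; exact hne (by simp; omega)
    simp [this]

lemma iteSnd (n : ℕ) (F : ℕ → M) :
    ∑ p ∈ antidiagonal n, (if p.2 = n then F p.1 else 0) = F 0 := by
  have := Finset.Nat.sum_antidiagonal_swap (n := n) (f := fun p => if p.1 = n then F p.2 else 0)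
  simp only [Prod.fst_swap, Prod.snd_swap] at this
  rw [this, iteFst]

end Triple

variable (K : Type*) [Field K] {A : Type*} [AddCommGroup A] [Module K A]

/-- Key step: the order-`n` obstruction is a 2-cocycle. -/
lemma key_cocycle
    (mul : A → A → A) (α β : A → A) (d : ℕ → A → A → A) (P : ℕ → A → A)
    (g : A → A → A) (n : ℕ)
    (halg : IsLeftBiHomAlt K mul α β) (hd : IsFormalDeformation K mul α β d)
    (hPlin : ∀ m, IsLinearMap K (P m))
    (hPa : ∀ m u, P m (α u) = α (P m u)) (hPb : ∀ m u, P m (β u) = β (P m u))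
    (hP0 : ∀ u, P 0 u = u)
    (dagger : ∀ s, s ≤ n → ∀ u v,
      ∑ q ∈ antidiagonal s, P q.1 (d q.2 u v)
        = (∑ q ∈ antidiagonal s, mul (P q.1 u) (P q.2 v))
          + (if s = n then g u v else 0)) :
    ∀ x y z, delta2adj mul α β g x y z = 0 := by
  intro x y z
  -- basic linearity helpers
  have hPsum : ∀ m (s : Finset (ℕ × ℕ)) (F : ℕ × ℕ → A),
      P m (∑ i ∈ s, F i) = ∑ i ∈ s, P m (F i) := by
    intro m s F
    exact map_sum (IsLinearMap.mk' (P m) (hPlin m)) F s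
  have hmulsumL : ∀ (w : A) (s : Finset (ℕ × ℕ)) (F : ℕ × ℕ → A),
      mul (∑ i ∈ s, F i) w = ∑ i ∈ s, mul (F i) w := by
    intro w s F
    exact map_sum (IsLinearMap.mk' (fun t => mul t w) (halg.mul_lin_left w)) F s
  have hmulsumR : ∀ (w : A) (s : Finset (ℕ × ℕ)) (F : ℕ × ℕ → A),
      mul w (∑ i ∈ s, F i) = ∑ i ∈ s, mul w (F i) := by
    intro w s F
    exact map_sum (IsLinearMap.mk' (fun t => mul w t) (halg.mul_lin_right w)) F s
  have hmul0L : ∀ w : A, mul 0 w = 0 := fun w => (halg.mul_lin_left w).map_zero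
  have hmul0R : ∀ w : A, mul w 0 = 0 := fun w => (halg.mul_lin_right w).map_zero
  -- the T1/T3 computation
  have hT13 : ∀ u v : A,
      ∑ p ∈ antidiagonal n, ∑ q ∈ antidiagonal p.2,
          P p.1 (d q.1 (d q.2 (β u) (α v)) (β z))
        = (∑ p ∈ antidiagonal n, ∑ q ∈ antidiagonal p.1,
            mul (mul (β (P q.1 u)) (α (P q.2 v))) (β (P p.2 z)))
          + mul (g (β u) (α v)) (β z) + g (mul (β u) (α v)) (β z) := by
    intro u v
    rw [tripleR1 n (fun a b c => P a (d b (d c (β u) (α v)) (β z)))]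
    have step1 : ∑ p ∈ antidiagonal n, ∑ q ∈ antidiagonal p.1,
        P q.1 (d q.2 (d p.2 (β u) (α v)) (β z))
        = ∑ p ∈ antidiagonal n,
            ((∑ q ∈ antidiagonal p.1, mul (P q.1 (d p.2 (β u) (α v))) (P q.2 (β z)))
              + (if p.1 = n then g (d p.2 (β u) (α v)) (β z) else 0)) :=
      Finset.sum_congr rfl fun p hp => dagger p.1 (Finset.HasAntidiagonal.antidiagonal.fst_le hp) _ _
    rw [step1, Finset.sum_add_distrib,
      iteFst n (fun j => g (d j (β u) (α v)) (β z)), hd.d_zero]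
    rw [tripleR2 n (fun a b c => mul (P a (d b (β u) (α v))) (P c (β z)))]
    have step2 : ∑ p ∈ antidiagonal n, ∑ q ∈ antidiagonal p.1,
        mul (P q.1 (d q.2 (β u) (α v))) (P p.2 (β z))
        = ∑ p ∈ antidiagonal n,
            ((∑ q ∈ antidiagonal p.1, mul (mul (P q.1 (β u)) (P q.2 (α v))) (P p.2 (β z)))
              + (if p.1 = n then mul (g (β u) (α v)) (P p.2 (β z)) else 0)) := by
      refine Finset.sum_congr rfl fun p hp => ?_
      rw [← hmulsumL (P p.2 (β z)) _ (fun q => P q.1 (d q.2 (β u) (α v))),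
        dagger p.1 (Finset.HasAntidiagonal.antidiagonal.fst_le hp) (β u) (α v),
        (halg.mul_lin_left (P p.2 (β z))).map_add,
        hmulsumL (P p.2 (β z)) _ (fun q => mul (P q.1 (β u)) (P q.2 (α v))),
        apply_ite (fun t => mul t (P p.2 (β z))) (p.1 = n), hmul0L]
    rw [step2, Finset.sum_add_distrib,
      iteFst n (fun j => mul (g (β u) (α v)) (P j (β z))), hP0 (β z)]
    have final : ∑ p ∈ antidiagonal n, ∑ q ∈ antidiagonal p.1,
        mul (mul (P q.1 (β u)) (P q.2 (α v))) (P p.2 (β z))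
        = ∑ p ∈ antidiagonal n, ∑ q ∈ antidiagonal p.1,
            mul (mul (β (P q.1 u)) (α (P q.2 v))) (β (P p.2 z)) := by
      refine Finset.sum_congr rfl fun p _ => Finset.sum_congr rfl fun q _ => ?_
      rw [hPa, hPb, hPb]
    rw [final]
  -- the T2/T4 computation
  have hT24 : ∀ u v : A,
      ∑ p ∈ antidiagonal n, ∑ q ∈ antidiagonal p.2,
          P p.1 (d q.1 (α (β u)) (d q.2 (α v) z))
        = (∑ p ∈ antidiagonal n, ∑ q ∈ antidiagonal p.1,
            mul (α (β (P q.1 u))) (mul (α (P q.2 v)) (P p.2 z)))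
          + mul (α (β u)) (g (α v) z) + g (α (β u)) (mul (α v) z) := by
    intro u v
    rw [tripleR1 n (fun a b c => P a (d b (α (β u)) (d c (α v) z)))]
    have step1 : ∑ p ∈ antidiagonal n, ∑ q ∈ antidiagonal p.1,
        P q.1 (d q.2 (α (β u)) (d p.2 (α v) z))
        = ∑ p ∈ antidiagonal n,
            ((∑ q ∈ antidiagonal p.1, mul (P q.1 (α (β u))) (P q.2 (d p.2 (α v) z)))
              + (if p.1 = n then g (α (β u)) (d p.2 (α v) z) else 0)) :=
      Finset.sum_congr rfl fun p hp => dagger p.1 (Finset.HasAntidiagonal.antidiagonal.fst_le hp) _ _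
    rw [step1, Finset.sum_add_distrib,
      iteFst n (fun j => g (α (β u)) (d j (α v) z)), hd.d_zero]
    rw [← tripleR1 n (fun a b c => mul (P a (α (β u))) (P b (d c (α v) z)))]
    have step2 : ∑ p ∈ antidiagonal n, ∑ q ∈ antidiagonal p.2,
        mul (P p.1 (α (β u))) (P q.1 (d q.2 (α v) z))
        = ∑ p ∈ antidiagonal n,
            ((∑ q ∈ antidiagonal p.2, mul (P p.1 (α (β u))) (mul (P q.1 (α v)) (P q.2 z)))
              + (if p.2 = n then mul (P p.1 (α (β u))) (g (α v) z) else 0)) := by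
      refine Finset.sum_congr rfl fun p hp => ?_
      rw [← hmulsumR (P p.1 (α (β u))) _ (fun q => P q.1 (d q.2 (α v) z)),
        dagger p.2 (Finset.HasAntidiagonal.antidiagonal.snd_le hp) (α v) z,
        (halg.mul_lin_right (P p.1 (α (β u)))).map_add,
        hmulsumR (P p.1 (α (β u))) _ (fun q => mul (P q.1 (α v)) (P q.2 z)),
        apply_ite (fun t => mul (P p.1 (α (β u))) t) (p.2 = n), hmul0R]
    rw [step2, Finset.sum_add_distrib,
      iteSnd n (fun j => mul (P j (α (β u))) (g (α v) z)), hP0 (α (β u))]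
    rw [tripleR1 n (fun a b c => mul (P a (α (β u))) (mul (P b (α v)) (P c z)))]
    have final : ∑ p ∈ antidiagonal n, ∑ q ∈ antidiagonal p.1,
        mul (P q.1 (α (β u))) (mul (P q.2 (α v)) (P p.2 z))
        = ∑ p ∈ antidiagonal n, ∑ q ∈ antidiagonal p.1,
            mul (α (β (P q.1 u))) (mul (α (P q.2 v)) (P p.2 z)) := by
      refine Finset.sum_congr rfl fun p _ => Finset.sum_congr rfl fun q _ => ?_
      rw [hPa, hPb, hPa]
    rw [final]
  -- starting point: deformation equations
  have S0 : ∑ p ∈ antidiagonal n,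
      P p.1 (∑ q ∈ antidiagonal p.2, diamond α β (d q.1) (d q.2) x y z) = 0 := by
    refine Finset.sum_eq_zero fun p _ => ?_
    rw [hd.deform_eq, (hPlin p.1).map_zero]
  have e1 : ∑ p ∈ antidiagonal n,
      P p.1 (∑ q ∈ antidiagonal p.2, diamond α β (d q.1) (d q.2) x y z)
      = ∑ p ∈ antidiagonal n, ∑ q ∈ antidiagonal p.2,
          P p.1 (diamond α β (d q.1) (d q.2) x y z) :=
    Finset.sum_congr rfl fun p _ => hPsum p.1 _ _
  have e2 : ∑ p ∈ antidiagonal n, ∑ q ∈ antidiagonal p.2,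
        P p.1 (diamond α β (d q.1) (d q.2) x y z)
      = (∑ p ∈ antidiagonal n, ∑ q ∈ antidiagonal p.2,
          P p.1 (d q.1 (d q.2 (β x) (α y)) (β z)))
        - (∑ p ∈ antidiagonal n, ∑ q ∈ antidiagonal p.2,
          P p.1 (d q.1 (α (β x)) (d q.2 (α y) z)))
        + (∑ p ∈ antidiagonal n, ∑ q ∈ antidiagonal p.2,
          P p.1 (d q.1 (d q.2 (β y) (α x)) (β z)))
        - (∑ p ∈ antidiagonal n, ∑ q ∈ antidiagonal p.2,
          P p.1 (d q.1 (α (β y)) (d q.2 (α x) z))) := by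
    rw [show ∑ p ∈ antidiagonal n, ∑ q ∈ antidiagonal p.2,
          P p.1 (diamond α β (d q.1) (d q.2) x y z)
        = ∑ p ∈ antidiagonal n, ∑ q ∈ antidiagonal p.2,
            (P p.1 (d q.1 (d q.2 (β x) (α y)) (β z))
              - P p.1 (d q.1 (α (β x)) (d q.2 (α y) z))
              + P p.1 (d q.1 (d q.2 (β y) (α x)) (β z))
              - P p.1 (d q.1 (α (β y)) (d q.2 (α x) z))) from
      Finset.sum_congr rfl fun p _ => Finset.sum_congr rfl fun q _ => by
        simp only [diamond]
        rw [(hPlin p.1).map_sub, (hPlin p.1).map_add, (hPlin p.1).map_sub]]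
    simp only [Finset.sum_sub_distrib, Finset.sum_add_distrib]
  have S2 : (∑ p ∈ antidiagonal n, ∑ q ∈ antidiagonal p.2,
        P p.1 (d q.1 (d q.2 (β x) (α y)) (β z)))
      - (∑ p ∈ antidiagonal n, ∑ q ∈ antidiagonal p.2,
        P p.1 (d q.1 (α (β x)) (d q.2 (α y) z)))
      + (∑ p ∈ antidiagonal n, ∑ q ∈ antidiagonal p.2,
        P p.1 (d q.1 (d q.2 (β y) (α x)) (β z)))
      - (∑ p ∈ antidiagonal n, ∑ q ∈ antidiagonal p.2,
        P p.1 (d q.1 (α (β y)) (d q.2 (α x) z))) = 0 := by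
    rw [← e2, ← e1, S0]
  rw [hT13 x y, hT24 x y, hT13 y x, hT24 y x] at S2
  have swap3 : ∑ p ∈ antidiagonal n, ∑ q ∈ antidiagonal p.1,
        mul (mul (β (P q.1 y)) (α (P q.2 x))) (β (P p.2 z))
      = ∑ p ∈ antidiagonal n, ∑ q ∈ antidiagonal p.1,
        mul (mul (β (P q.2 y)) (α (P q.1 x))) (β (P p.2 z)) :=
    tripleR3 n (fun a b c => mul (mul (β (P a y)) (α (P b x))) (β (P c z)))
  have swap4 : ∑ p ∈ antidiagonal n, ∑ q ∈ antidiagonal p.1,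
        mul (α (β (P q.1 y))) (mul (α (P q.2 x)) (P p.2 z))
      = ∑ p ∈ antidiagonal n, ∑ q ∈ antidiagonal p.1,
        mul (α (β (P q.2 y))) (mul (α (P q.1 x)) (P p.2 z)) :=
    tripleR3 n (fun a b c => mul (α (β (P a y))) (mul (α (P b x)) (P c z)))
  rw [swap3, swap4] at S2
  have hBs : (∑ p ∈ antidiagonal n, ∑ q ∈ antidiagonal p.1,
        mul (mul (β (P q.1 x)) (α (P q.2 y))) (β (P p.2 z)))
      - (∑ p ∈ antidiagonal n, ∑ q ∈ antidiagonal p.1,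
        mul (α (β (P q.1 x))) (mul (α (P q.2 y)) (P p.2 z)))
      + (∑ p ∈ antidiagonal n, ∑ q ∈ antidiagonal p.1,
        mul (mul (β (P q.2 y)) (α (P q.1 x))) (β (P p.2 z)))
      - (∑ p ∈ antidiagonal n, ∑ q ∈ antidiagonal p.1,
        mul (α (β (P q.2 y))) (mul (α (P q.1 x)) (P p.2 z))) = 0 := by
    simp only [← Finset.sum_sub_distrib, ← Finset.sum_add_distrib]
    refine Finset.sum_eq_zero fun p _ => ?_
    refine Finset.sum_eq_zero fun q _ => ?_
    have h := halg.left_alt (P q.1 x) (P q.2 y) (P p.2 z)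
    simp only [biAssoc] at h
    rw [← h]
    abel
  have keyeq : delta2adj mul α β g x y z
      = ((∑ p ∈ antidiagonal n, ∑ q ∈ antidiagonal p.1,
            mul (mul (β (P q.1 x)) (α (P q.2 y))) (β (P p.2 z)))
          + mul (g (β x) (α y)) (β z) + g (mul (β x) (α y)) (β z)
        - ((∑ p ∈ antidiagonal n, ∑ q ∈ antidiagonal p.1,
            mul (α (β (P q.1 x))) (mul (α (P q.2 y)) (P p.2 z)))
          + mul (α (β x)) (g (α y) z) + g (α (β x)) (mul (α y) z))
        + ((∑ p ∈ antidiagonal n, ∑ q ∈ antidiagonal p.1,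
            mul (mul (β (P q.2 y)) (α (P q.1 x))) (β (P p.2 z)))
          + mul (g (β y) (α x)) (β z) + g (mul (β y) (α x)) (β z))
        - ((∑ p ∈ antidiagonal n, ∑ q ∈ antidiagonal p.1,
            mul (α (β (P q.2 y))) (mul (α (P q.1 x)) (P p.2 z)))
          + mul (α (β y)) (g (α x) z) + g (α (β y)) (mul (α x) z)))
        - ((∑ p ∈ antidiagonal n, ∑ q ∈ antidiagonal p.1,
            mul (mul (β (P q.1 x)) (α (P q.2 y))) (β (P p.2 z)))
          - (∑ p ∈ antidiagonal n, ∑ q ∈ antidiagonal p.1,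
            mul (α (β (P q.1 x))) (mul (α (P q.2 y)) (P p.2 z)))
          + (∑ p ∈ antidiagonal n, ∑ q ∈ antidiagonal p.1,
            mul (mul (β (P q.2 y)) (α (P q.1 x))) (β (P p.2 z)))
          - (∑ p ∈ antidiagonal n, ∑ q ∈ antidiagonal p.1,
            mul (α (β (P q.2 y))) (mul (α (P q.1 x)) (P p.2 z)))) := by
    simp only [delta2adj]
    abel
  rw [keyeq, S2, hBs, sub_zero]

/-- The order-`n` obstruction is a 2-cochain. -/
lemma obstruction_cochain
    (mul : A → A → A) (α β : A → A) (d : ℕ → A → A → A) (P : ℕ → A → A)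
    (g : A → A → A) (n : ℕ)
    (halg : IsLeftBiHomAlt K mul α β) (hd : IsFormalDeformation K mul α β d)
    (hPlin : ∀ m, IsLinearMap K (P m))
    (hPa : ∀ m u, P m (α u) = α (P m u)) (hPb : ∀ m u, P m (β u) = β (P m u))
    (hgdef : ∀ u v, g u v = (∑ p ∈ antidiagonal n, P p.1 (d p.2 u v))
      - ∑ p ∈ antidiagonal n, mul (P p.1 u) (P p.2 v)) :
    IsAdjCochain2 K α β g := by
  constructor
  · intro v
    constructor
    · intro a b
      rw [hgdef, hgdef, hgdef]
      have e1 : ∑ p ∈ antidiagonal n, P p.1 (d p.2 (a + b) v)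
          = ∑ p ∈ antidiagonal n, (P p.1 (d p.2 a v) + P p.1 (d p.2 b v)) :=
        Finset.sum_congr rfl fun p _ => by
          rw [(hd.lin_left p.2 v).map_add, (hPlin p.1).map_add]
      have e2 : ∑ p ∈ antidiagonal n, mul (P p.1 (a + b)) (P p.2 v)
          = ∑ p ∈ antidiagonal n, (mul (P p.1 a) (P p.2 v) + mul (P p.1 b) (P p.2 v)) :=
        Finset.sum_congr rfl fun p _ => by
          rw [(hPlin p.1).map_add, (halg.mul_lin_left (P p.2 v)).map_add]
      rw [e1, e2, Finset.sum_add_distrib, Finset.sum_add_distrib]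
      abel
    · intro c a
      rw [hgdef, hgdef]
      have e1 : ∑ p ∈ antidiagonal n, P p.1 (d p.2 (c • a) v)
          = ∑ p ∈ antidiagonal n, c • P p.1 (d p.2 a v) :=
        Finset.sum_congr rfl fun p _ => by
          rw [(hd.lin_left p.2 v).map_smul, (hPlin p.1).map_smul]
      have e2 : ∑ p ∈ antidiagonal n, mul (P p.1 (c • a)) (P p.2 v)
          = ∑ p ∈ antidiagonal n, c • mul (P p.1 a) (P p.2 v) :=
        Finset.sum_congr rfl fun p _ => by
          rw [(hPlin p.1).map_smul, (halg.mul_lin_left (P p.2 v)).map_smul]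
      rw [e1, e2, ← Finset.smul_sum, ← Finset.smul_sum, ← smul_sub]
  · intro u
    constructor
    · intro a b
      rw [hgdef, hgdef, hgdef]
      have e1 : ∑ p ∈ antidiagonal n, P p.1 (d p.2 u (a + b))
          = ∑ p ∈ antidiagonal n, (P p.1 (d p.2 u a) + P p.1 (d p.2 u b)) :=
        Finset.sum_congr rfl fun p _ => by
          rw [(hd.lin_right p.2 u).map_add, (hPlin p.1).map_add]
      have e2 : ∑ p ∈ antidiagonal n, mul (P p.1 u) (P p.2 (a + b))
          = ∑ p ∈ antidiagonal n, (mul (P p.1 u) (P p.2 a) + mul (P p.1 u) (P p.2 b)) :=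
        Finset.sum_congr rfl fun p _ => by
          rw [(hPlin p.2).map_add, (halg.mul_lin_right (P p.1 u)).map_add]
      rw [e1, e2, Finset.sum_add_distrib, Finset.sum_add_distrib]
      abel
    · intro c a
      rw [hgdef, hgdef]
      have e1 : ∑ p ∈ antidiagonal n, P p.1 (d p.2 u (c • a))
          = ∑ p ∈ antidiagonal n, c • P p.1 (d p.2 u a) :=
        Finset.sum_congr rfl fun p _ => by
          rw [(hd.lin_right p.2 u).map_smul, (hPlin p.1).map_smul]
      have e2 : ∑ p ∈ antidiagonal n, mul (P p.1 u) (P p.2 (c • a))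
          = ∑ p ∈ antidiagonal n, c • mul (P p.1 u) (P p.2 a) :=
        Finset.sum_congr rfl fun p _ => by
          rw [(hPlin p.2).map_smul, (halg.mul_lin_right (P p.1 u)).map_smul]
      rw [e1, e2, ← Finset.smul_sum, ← Finset.smul_sum, ← smul_sub]
  · intro u v
    rw [hgdef, hgdef]
    have e1 : ∑ p ∈ antidiagonal n, P p.1 (d p.2 (α u) (α v))
        = α (∑ p ∈ antidiagonal n, P p.1 (d p.2 u v)) := by
      rw [show ∑ p ∈ antidiagonal n, P p.1 (d p.2 (α u) (α v))
          = ∑ p ∈ antidiagonal n, α (P p.1 (d p.2 u v)) from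
        Finset.sum_congr rfl fun p _ => by rw [hd.equiv_a, hPa]]
      exact (map_sum (IsLinearMap.mk' α halg.alpha_lin) _ _).symm
    have e2 : ∑ p ∈ antidiagonal n, mul (P p.1 (α u)) (P p.2 (α v))
        = α (∑ p ∈ antidiagonal n, mul (P p.1 u) (P p.2 v)) := by
      rw [show ∑ p ∈ antidiagonal n, mul (P p.1 (α u)) (P p.2 (α v))
          = ∑ p ∈ antidiagonal n, α (mul (P p.1 u) (P p.2 v)) from
        Finset.sum_congr rfl fun p _ => by rw [hPa, hPa, ← halg.alpha_mul]]
      exact (map_sum (IsLinearMap.mk' α halg.alpha_lin) _ _).symm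
    rw [e1, e2]
    exact (halg.alpha_lin.map_sub _ _).symm
  · intro u v
    rw [hgdef, hgdef]
    have e1 : ∑ p ∈ antidiagonal n, P p.1 (d p.2 (β u) (β v))
        = β (∑ p ∈ antidiagonal n, P p.1 (d p.2 u v)) := by
      rw [show ∑ p ∈ antidiagonal n, P p.1 (d p.2 (β u) (β v))
          = ∑ p ∈ antidiagonal n, β (P p.1 (d p.2 u v)) from
        Finset.sum_congr rfl fun p _ => by rw [hd.equiv_b, hPb]]
      exact (map_sum (IsLinearMap.mk' β halg.beta_lin) _ _).symm
    have e2 : ∑ p ∈ antidiagonal n, mul (P p.1 (β u)) (P p.2 (β v))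
        = β (∑ p ∈ antidiagonal n, mul (P p.1 u) (P p.2 v)) := by
      rw [show ∑ p ∈ antidiagonal n, mul (P p.1 (β u)) (P p.2 (β v))
          = ∑ p ∈ antidiagonal n, β (mul (P p.1 u) (P p.2 v)) from
        Finset.sum_congr rfl fun p _ => by rw [hPb, hPb, ← halg.beta_mul]]
      exact (map_sum (IsLinearMap.mk' β halg.beta_lin) _ _).symm
    rw [e1, e2]
    exact (halg.beta_lin.map_sub _ _).symm

open Classical in
/-- Choice of the next linear map in the recursive construction. -/
noncomputable def nextPhi (K : Type*) [Field K] {A : Type*} [AddCommGroup A] [Module K A]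
    (mul : A → A → A) (d : ℕ → A → A → A) (α β : A → A)
    (prev : ℕ → A → A) (n : ℕ) : A → A :=
  if h : ∃ f : A → A, IsLinearMap K f ∧ (∀ x, f (α x) = α (f x)) ∧
      (∀ x, f (β x) = β (f x)) ∧
      ∀ x y, ((∑ p ∈ Finset.HasAntidiagonal.antidiagonal n, prev p.1 (d p.2 x y))
          - ∑ p ∈ Finset.HasAntidiagonal.antidiagonal n, mul (prev p.1 x) (prev p.2 y))
        = mul x (f y) + mul (f x) y - f (mul x y)
  then h.choose else 0

/-- Prefixes of the equivalence. -/
noncomputable def allPhi (K : Type*) [Field K] {A : Type*} [AddCommGroup A] [Module K A]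
    (mul : A → A → A) (d : ℕ → A → A → A) (α β : A → A) : ℕ → ℕ → A → A
  | 0 => fun m => if m = 0 then (id : A → A) else 0
  | (k + 1) => Function.update (allPhi K mul d α β k) (k + 1)
      (nextPhi K mul d α β (allPhi K mul d α β k) (k + 1))

variable {K : Type*} [Field K] {A : Type*} [AddCommGroup A] [Module K A]

lemma allPhi_gt (K : Type*) [Field K] {A : Type*} [AddCommGroup A] [Module K A]
    (mul : A → A → A) (d : ℕ → A → A → A) (α β : A → A) :
    ∀ k m, k < m → allPhi K mul d α β k m = 0 := by
  intro k
  induction k with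
  | zero => intro m hm; simp only [allPhi]; rw [if_neg (by omega)]
  | succ k ih =>
    intro m hm
    simp only [allPhi]
    rw [Function.update_of_ne (by omega), ih m (by omega)]

lemma allPhi_stab (K : Type*) [Field K] {A : Type*} [AddCommGroup A] [Module K A]
    (mul : A → A → A) (d : ℕ → A → A → A) (α β : A → A) :
    ∀ k m, m ≤ k → allPhi K mul d α β k m = allPhi K mul d α β m m := by
  intro k
  induction k with
  | zero => intro m hm; have : m = 0 := by omega
            subst this; rfl
  | succ k ih =>
    intro m hm
    rcases eq_or_lt_of_le hm with h | h
    · rw [h]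
    · simp only [allPhi]
      rw [Function.update_of_ne (by omega)]
      exact ih m (by omega)

lemma allPhi_zero_zero (K : Type*) [Field K] {A : Type*} [AddCommGroup A] [Module K A]
    (mul : A → A → A) (d : ℕ → A → A → A) (α β : A → A) :
    allPhi K mul d α β 0 0 = id := by
  simp [allPhi]

lemma allPhi_succ (K : Type*) [Field K] {A : Type*} [AddCommGroup A] [Module K A]
    (mul : A → A → A) (d : ℕ → A → A → A) (α β : A → A) (k : ℕ) :
    allPhi K mul d α β (k + 1) (k + 1)
      = nextPhi K mul d α β (allPhi K mul d α β k) (k + 1) := by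
  simp only [allPhi]
  rw [Function.update_self]

end RigidAux

/-- If every 2-cocycle with coefficients in the adjoint representation is a
1-coboundary, then the left BiHom-alternative algebra is analytically rigid:
every formal deformation is equivalent to the null deformation. -/
theorem rigid_of_H2_trivial
    (K : Type*) [Field K] [CharZero K] {A : Type*} [AddCommGroup A] [Module K A]
    (mul : A → A → A) (α β : A → A) (halg : IsLeftBiHomAlt K mul α β)
    (H2 : ∀ g : A → A → A, IsAdjCochain2 K α β g →
      (∀ x y z, delta2adj mul α β g x y z = 0) →
      ∃ h : A → A, IsLinearMap K h ∧ (∀ x, h (α x) = α (h x)) ∧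
        (∀ x, h (β x) = β (h x)) ∧
        ∀ x y, g x y = mul x (h y) + mul (h x) y - h (mul x y)) :
    ∀ d : ℕ → A → A → A, IsFormalDeformation K mul α β d →
      ∃ Φ : ℕ → A → A, (∀ i, IsLinearMap K (Φ i)) ∧ Φ 0 = id ∧
        (∀ i x, Φ i (α x) = α (Φ i x)) ∧ (∀ i x, Φ i (β x) = β (Φ i x)) ∧
        ∀ n x y, ∑ p ∈ Finset.HasAntidiagonal.antidiagonal n, Φ p.1 (d p.2 x y)
          = ∑ p ∈ Finset.HasAntidiagonal.antidiagonal n, mul (Φ p.1 x) (Φ p.2 y) := by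
  intro d hd
  classical
  open Finset RigidAux in
  refine ⟨fun m => RigidAux.allPhi K mul d α β m m, ?_⟩
  set Φ : ℕ → A → A := fun m => RigidAux.allPhi K mul d α β m m with hΦdef
  have hΦ0 : Φ 0 = id := RigidAux.allPhi_zero_zero K mul d α β
  have main : ∀ n : ℕ, IsLinearMap K (Φ n) ∧ (∀ u, Φ n (α u) = α (Φ n u)) ∧
      (∀ u, Φ n (β u) = β (Φ n u)) ∧
      ∀ x y, ∑ p ∈ Finset.HasAntidiagonal.antidiagonal n, Φ p.1 (d p.2 x y)
        = ∑ p ∈ Finset.HasAntidiagonal.antidiagonal n, mul (Φ p.1 x) (Φ p.2 y) := by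
    intro n
    induction n using Nat.strong_induction_on with
    | _ n IH =>
      match n with
      | 0 =>
        refine ⟨?_, ?_, ?_, ?_⟩
        · rw [hΦ0]; exact ⟨fun _ _ => rfl, fun _ _ => rfl⟩
        · intro u; rw [hΦ0]; rfl
        · intro u; rw [hΦ0]; rfl
        · intro x y
          simp only [Finset.Nat.antidiagonal_zero, Finset.sum_singleton]
          rw [hΦ0, hd.d_zero]
          rfl
      | (k + 1) =>
        -- the prefix sequence
        set P : ℕ → A → A := RigidAux.allPhi K mul d α β k with hPdef
        have hPeq : ∀ m, m ≤ k → P m = Φ m := fun m hm =>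
          RigidAux.allPhi_stab K mul d α β k m hm
        have hPgt : ∀ m, k < m → P m = 0 := fun m hm =>
          RigidAux.allPhi_gt K mul d α β k m hm
        have hPlin : ∀ m, IsLinearMap K (P m) := by
          intro m
          rcases le_or_gt m k with h | h
          · rw [hPeq m h]; exact (IH m (by omega)).1
          · rw [hPgt m h]; exact ⟨by simp, by simp⟩
        have hPa : ∀ m u, P m (α u) = α (P m u) := by
          intro m u
          rcases le_or_gt m k with h | h
          · rw [hPeq m h]; exact (IH m (by omega)).2.1 u
          · rw [hPgt m h]
            simp only [Pi.zero_apply]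
            exact (halg.alpha_lin.map_zero).symm
        have hPb : ∀ m u, P m (β u) = β (P m u) := by
          intro m u
          rcases le_or_gt m k with h | h
          · rw [hPeq m h]; exact (IH m (by omega)).2.2.1 u
          · rw [hPgt m h]
            simp only [Pi.zero_apply]
            exact (halg.beta_lin.map_zero).symm
        have hP0u : ∀ u, P 0 u = u := by
          intro u
          rw [hPeq 0 (Nat.zero_le k)]
          show Φ 0 u = u
          rw [hΦ0]; rfl
        -- the obstruction
        set G : A → A → A := fun u v =>
          (∑ p ∈ Finset.HasAntidiagonal.antidiagonal (k + 1), P p.1 (d p.2 u v))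
            - ∑ p ∈ Finset.HasAntidiagonal.antidiagonal (k + 1), mul (P p.1 u) (P p.2 v) with hGdef
        have hGuv : ∀ u v, G u v = (∑ p ∈ Finset.HasAntidiagonal.antidiagonal (k + 1), P p.1 (d p.2 u v))
            - ∑ p ∈ Finset.HasAntidiagonal.antidiagonal (k + 1), mul (P p.1 u) (P p.2 v) := fun _ _ => rfl
        have dagger : ∀ s, s ≤ k + 1 → ∀ u v,
            ∑ q ∈ Finset.HasAntidiagonal.antidiagonal s, P q.1 (d q.2 u v)
              = (∑ q ∈ Finset.HasAntidiagonal.antidiagonal s, mul (P q.1 u) (P q.2 v))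
                + (if s = k + 1 then G u v else 0) := by
          intro s hs u v
          by_cases h : s = k + 1
          · subst h
            rw [if_pos rfl, hGuv]
            abel
          · rw [if_neg h, add_zero]
            have hsk : s ≤ k := by omega
            have e1 : ∑ q ∈ Finset.HasAntidiagonal.antidiagonal s, P q.1 (d q.2 u v)
                = ∑ q ∈ Finset.HasAntidiagonal.antidiagonal s, Φ q.1 (d q.2 u v) :=
              Finset.sum_congr rfl fun q hq => by
                rw [hPeq q.1 (le_trans (Finset.HasAntidiagonal.antidiagonal.fst_le hq) hsk)]
            have e2 : ∑ q ∈ Finset.HasAntidiagonal.antidiagonal s, mul (P q.1 u) (P q.2 v)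
                = ∑ q ∈ Finset.HasAntidiagonal.antidiagonal s, mul (Φ q.1 u) (Φ q.2 v) :=
              Finset.sum_congr rfl fun q hq => by
                rw [hPeq q.1 (le_trans (Finset.HasAntidiagonal.antidiagonal.fst_le hq) hsk),
                  hPeq q.2 (le_trans (Finset.HasAntidiagonal.antidiagonal.snd_le hq) hsk)]
            rw [e1, e2]
            exact (IH s (by omega)).2.2.2 u v
        have hco := RigidAux.key_cocycle K mul α β d P G (k + 1) halg hd hPlin hPa hPb
          hP0u dagger
        have hcochain := RigidAux.obstruction_cochain K mul α β d P G (k + 1) halg hd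
          hPlin hPa hPb hGuv
        have hex := H2 G hcochain hco
        have hex' : ∃ f : A → A, IsLinearMap K f ∧ (∀ x, f (α x) = α (f x)) ∧
            (∀ x, f (β x) = β (f x)) ∧
            ∀ x y, ((∑ p ∈ Finset.HasAntidiagonal.antidiagonal (k + 1), P p.1 (d p.2 x y))
                - ∑ p ∈ Finset.HasAntidiagonal.antidiagonal (k + 1), mul (P p.1 x) (P p.2 y))
              = mul x (f y) + mul (f x) y - f (mul x y) := by
          obtain ⟨f, h1, h2, h3, h4⟩ := hex
          exact ⟨f, h1, h2, h3, fun x y => by rw [← hGuv]; exact h4 x y⟩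
        have hval : Φ (k + 1) = hex'.choose := by
          show RigidAux.allPhi K mul d α β (k + 1) (k + 1) = hex'.choose
          rw [RigidAux.allPhi_succ K mul d α β k]
          show RigidAux.nextPhi K mul d α β P (k + 1) = hex'.choose
          rw [RigidAux.nextPhi]
          exact dif_pos hex'
        obtain ⟨hlin, hca, hcb, heq⟩ := hex'.choose_spec
        refine ⟨by rw [hval]; exact hlin, fun u => by rw [hval]; exact hca u,
          fun u => by rw [hval]; exact hcb u, ?_⟩
        -- the order-(k+1) equivalence equation
        intro x y
        have hmem1 : ((k + 1 : ℕ), (0 : ℕ)) ∈ Finset.HasAntidiagonal.antidiagonal (k + 1) := by simp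
        have hmem2 : ((0 : ℕ), (k + 1 : ℕ))
            ∈ (Finset.HasAntidiagonal.antidiagonal (k + 1)).erase (k + 1, 0) := by
          rw [Finset.mem_erase]
          exact ⟨by simp, by simp⟩
        have split1 : ∀ F : ℕ × ℕ → A, ∑ p ∈ Finset.HasAntidiagonal.antidiagonal (k + 1), F p
            = F (k + 1, 0) + ∑ p ∈ (Finset.HasAntidiagonal.antidiagonal (k + 1)).erase (k + 1, 0), F p :=
          fun F => (Finset.add_sum_erase _ F hmem1).symm
        have split2 : ∀ F : ℕ × ℕ → A,
            ∑ p ∈ (Finset.HasAntidiagonal.antidiagonal (k + 1)).erase (k + 1, 0), F p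
            = F (0, k + 1)
              + ∑ p ∈ ((Finset.HasAntidiagonal.antidiagonal (k + 1)).erase (k + 1, 0)).erase (0, k + 1), F p :=
          fun F => (Finset.add_sum_erase _ F hmem2).symm
        have hfst : ∀ p : ℕ × ℕ, p ∈ (Finset.HasAntidiagonal.antidiagonal (k + 1)).erase (k + 1, 0) →
            p.1 ≤ k := by
          rintro ⟨a, b⟩ hp
          have h1 := Finset.mem_erase.mp hp
          have h2 := Finset.HasAntidiagonal.mem_antidiagonal.mp h1.2
          have hab : a + b = k + 1 := h2
          by_contra hgt
          have ha : a = k + 1 := by omega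
          have hb : b = 0 := by omega
          subst ha; subst hb
          exact h1.1 rfl
        have hsnd : ∀ p : ℕ × ℕ,
            p ∈ ((Finset.HasAntidiagonal.antidiagonal (k + 1)).erase (k + 1, 0)).erase (0, k + 1) →
            p.1 ≤ k ∧ p.2 ≤ k := by
          rintro ⟨a, b⟩ hp
          have h0 := Finset.mem_erase.mp hp
          have h1 := Finset.mem_erase.mp h0.2
          have h2 := Finset.HasAntidiagonal.mem_antidiagonal.mp h1.2
          constructor
          · exact hfst (a, b) h0.2
          · have hab : a + b = k + 1 := h2
            by_contra hgt
            have hb : b = k + 1 := by omega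
            have ha : a = 0 := by omega
            subst hb; subst ha
            exact h0.1 rfl
        -- rewrite the goal sums via the prefix P
        have eL : ∑ p ∈ Finset.HasAntidiagonal.antidiagonal (k + 1), Φ p.1 (d p.2 x y)
            = Φ (k + 1) (mul x y)
              + ∑ p ∈ Finset.HasAntidiagonal.antidiagonal (k + 1), P p.1 (d p.2 x y) := by
          rw [split1 (fun p => Φ p.1 (d p.2 x y)), split1 (fun p => P p.1 (d p.2 x y))]
          have c1 : ∑ p ∈ (Finset.HasAntidiagonal.antidiagonal (k + 1)).erase (k + 1, 0), Φ p.1 (d p.2 x y)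
              = ∑ p ∈ (Finset.HasAntidiagonal.antidiagonal (k + 1)).erase (k + 1, 0), P p.1 (d p.2 x y) :=
            Finset.sum_congr rfl fun p hp => by rw [hPeq p.1 (hfst p hp)]
          rw [c1, hPgt (k + 1) (by omega), hd.d_zero]
          simp only [Pi.zero_apply, zero_add]
        have eR : ∑ p ∈ Finset.HasAntidiagonal.antidiagonal (k + 1), mul (Φ p.1 x) (Φ p.2 y)
            = mul (Φ (k + 1) x) y + mul x (Φ (k + 1) y)
              + ∑ p ∈ Finset.HasAntidiagonal.antidiagonal (k + 1), mul (P p.1 x) (P p.2 y) := by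
          rw [split1 (fun p => mul (Φ p.1 x) (Φ p.2 y)),
            split2 (fun p => mul (Φ p.1 x) (Φ p.2 y)),
            split1 (fun p => mul (P p.1 x) (P p.2 y)),
            split2 (fun p => mul (P p.1 x) (P p.2 y))]
          have c2 : ∑ p ∈ ((Finset.HasAntidiagonal.antidiagonal (k + 1)).erase (k + 1, 0)).erase (0, k + 1),
                mul (Φ p.1 x) (Φ p.2 y)
              = ∑ p ∈ ((Finset.HasAntidiagonal.antidiagonal (k + 1)).erase (k + 1, 0)).erase (0, k + 1),
                mul (P p.1 x) (P p.2 y) :=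
            Finset.sum_congr rfl fun p hp => by
              rw [hPeq p.1 (hsnd p hp).1, hPeq p.2 (hsnd p hp).2]
          rw [c2, hPgt (k + 1) (by omega)]
          simp only [Pi.zero_apply]
          have hm0L : ∀ w : A, mul 0 w = 0 := fun w => (halg.mul_lin_left w).map_zero
          have hm0R : ∀ w : A, mul w 0 = 0 := fun w => (halg.mul_lin_right w).map_zero
          rw [hm0L, hm0R]
          have hid : Φ 0 x = x := by rw [hΦ0]; rfl
          have hid' : Φ 0 y = y := by rw [hΦ0]; rfl
          rw [hid, hid']
          abel
        rw [eL, eR, hval]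
        have h9 := heq x y
        have h10 : ∑ p ∈ Finset.HasAntidiagonal.antidiagonal (k + 1), P p.1 (d p.2 x y)
            = mul x (hex'.choose y) + mul (hex'.choose x) y - hex'.choose (mul x y)
              + ∑ p ∈ Finset.HasAntidiagonal.antidiagonal (k + 1), mul (P p.1 x) (P p.2 y) := by
          rw [← h9]; abel
        rw [h10]
        abel
  exact ⟨fun i => (main i).1, hΦ0, fun i => (main i).2.1, fun i => (main i).2.2.1,
    fun n => (main n).2.2.2⟩
end

section
/- Let (V, ℓ, r, φ, ψ) be a representation of a BiHom-alternative algebra (A, μ, α, β) with α, β, φ, ψ invertible. Then the dual tuple (V*, r^⋆, ℓ^⋆, (φ⁻¹)*, (ψ⁻¹)*) — i.e. the tuple whose left-action maps are r^⋆, whose right-action maps are ℓ^⋆, and whose structure maps are the transposes (φ⁻¹)* and (ψ⁻¹)* — is a representation of (A, μ, α, β). -/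
/-- A BiHom-alternative algebra. -/
structure IsBiHomAlt (K : Type*) {A : Type*} [Field K] [AddCommGroup A] [Module K A]
    (mul : A → A → A) (α β : A → A) extends IsBiHomAlg K mul α β : Prop where
  left_alt : ∀ x y z,
    biAssoc mul α β (β x) (α y) z + biAssoc mul α β (β y) (α x) z = 0
  right_alt : ∀ x y z,
    biAssoc mul α β x (β y) (α z) + biAssoc mul α β x (β z) (α y) = 0

/-- The dual representation: if `(V, ℓ, r, φ, ψ)` is a representation of a
BiHom-alternative algebra `(A, μ, α, β)` with `α, β, φ, ψ` invertible, then
`(V*, r^⋆, ℓ^⋆, (φ⁻¹)*, (ψ⁻¹)*)` is a representation of `(A, μ, α, β)`, where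
`⟨ℓ^⋆(x)(ξ), u⟩ = ⟨ξ, ℓ(α⁻²β(x))(φ⁻¹ψ⁻¹(u))⟩` and
`⟨r^⋆(x)(ξ), u⟩ = ⟨ξ, r(αβ⁻²(x))(φ⁻¹ψ⁻¹(u))⟩`. -/
theorem dual_isBiHomRep
    (K : Type*) [Field K] [CharZero K] {A V : Type*} [AddCommGroup A] [Module K A]
    [AddCommGroup V] [Module K V]
    (mul : A → A → A) (α β : A ≃ₗ[K] A) (halg : IsBiHomAlt K mul (⇑α) (⇑β))
    (l r : A → Module.End K V) (φ ψ : V ≃ₗ[K] V)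
    (hrep : IsBiHomRep K mul (⇑α) (⇑β) l r φ.toLinearMap ψ.toLinearMap) :
    IsBiHomRep K mul (⇑α) (⇑β)
      (fun x => (r (α (β.symm (β.symm x))) ∘ₗ
        (φ.symm.toLinearMap ∘ₗ ψ.symm.toLinearMap)).dualMap)
      (fun x => (l (α.symm (α.symm (β x))) ∘ₗ
        (φ.symm.toLinearMap ∘ₗ ψ.symm.toLinearMap)).dualMap)
      φ.symm.toLinearMap.dualMap ψ.symm.toLinearMap.dualMap := by
  have hφl : ∀ x v, φ (l x v) = l (α x) (φ v) := hrep.phi_l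
  have hφr : ∀ x v, φ (r x v) = r (α x) (φ v) := hrep.phi_r
  have hψl : ∀ x v, ψ (l x v) = l (β x) (ψ v) := hrep.psi_l
  have hψr : ∀ x v, ψ (r x v) = r (β x) (ψ v) := hrep.psi_r
  have hφl' : ∀ x v, φ.symm (l x v) = l (α.symm x) (φ.symm v) := fun x v =>
    φ.injective (by rw [φ.apply_symm_apply, hφl, α.apply_symm_apply, φ.apply_symm_apply])
  have hφr' : ∀ x v, φ.symm (r x v) = r (α.symm x) (φ.symm v) := fun x v =>
    φ.injective (by rw [φ.apply_symm_apply, hφr, α.apply_symm_apply, φ.apply_symm_apply])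
  have hψl' : ∀ x v, ψ.symm (l x v) = l (β.symm x) (ψ.symm v) := fun x v =>
    ψ.injective (by rw [ψ.apply_symm_apply, hψl, β.apply_symm_apply, ψ.apply_symm_apply])
  have hψr' : ∀ x v, ψ.symm (r x v) = r (β.symm x) (ψ.symm v) := fun x v =>
    ψ.injective (by rw [ψ.apply_symm_apply, hψr, β.apply_symm_apply, ψ.apply_symm_apply])
  have hpc : ∀ v, φ (ψ v) = ψ (φ v) := hrep.phi_psi_comm
  have hψφs : ∀ v, ψ (φ.symm v) = φ.symm (ψ v) := fun v =>
    φ.injective (by rw [φ.apply_symm_apply, hpc, φ.apply_symm_apply])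
  have hφψs : ∀ v, φ (ψ.symm v) = ψ.symm (φ v) := fun v =>
    ψ.injective (by rw [ψ.apply_symm_apply, ← hpc, ψ.apply_symm_apply])
  have hsψφ : ∀ v, ψ.symm (φ.symm v) = φ.symm (ψ.symm v) := fun v =>
    φ.injective (by rw [φ.apply_symm_apply, hφψs, φ.apply_symm_apply])
  have hc1 : ∀ x, α (β x) = β (α x) := halg.alpha_beta_comm
  have hc2 : ∀ x, α (β.symm x) = β.symm (α x) := fun x =>
    β.injective (by rw [β.apply_symm_apply, ← hc1, β.apply_symm_apply])
  have hc3 : ∀ x, α.symm (β x) = β (α.symm x) := fun x =>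
    α.injective (by rw [α.apply_symm_apply, hc1, α.apply_symm_apply])
  have hc4 : ∀ x, α.symm (β.symm x) = β.symm (α.symm x) := fun x =>
    α.injective (by rw [α.apply_symm_apply, hc2, α.apply_symm_apply])
  have hαm : ∀ x y, α (mul x y) = mul (α x) (α y) := halg.alpha_mul
  have hβm : ∀ x y, β (mul x y) = mul (β x) (β y) := halg.beta_mul
  have hαm' : ∀ x y, α.symm (mul x y) = mul (α.symm x) (α.symm y) := fun x y =>
    α.injective (by rw [α.apply_symm_apply, hαm, α.apply_symm_apply, α.apply_symm_apply])
  have hβm' : ∀ x y, β.symm (mul x y) = mul (β.symm x) (β.symm y) := fun x y =>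
    β.injective (by rw [β.apply_symm_apply, hβm, β.apply_symm_apply, β.apply_symm_apply])
  have hrl : ∀ x y, r (x + y) = r x + r y := hrep.r_lin.map_add
  have hml : ∀ c x y, mul (x + y) c = mul x c + mul y c := fun c x y =>
    (halg.mul_lin_left c).map_add x y
  have hmr : ∀ c x y, mul c (x + y) = mul c x + mul c y := fun c x y =>
    (halg.mul_lin_right c).map_add x y
  have hpolr : ∀ a b v, r (mul (β a) (α b)) (φ v) + r (mul (β b) (α a)) (φ v)
      = r (α (β a)) (r (β b) v) + r (α (β b)) (r (β a) v) := by
    intro a b v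
    have h1 := hrep.rep2 (a + b) v
    have h2 := hrep.rep2 a v
    have h3 := hrep.rep2 b v
    simp only [map_add, hml, hmr, hrl, LinearMap.add_apply, LinearEquiv.coe_coe] at h1 h2 h3
    linear_combination (norm := abel) h1 - h2 - h3
  constructor
  case phi_l =>
    intro x ξ
    refine LinearMap.ext fun u => ?_
    simp only [LinearMap.dualMap_apply, LinearMap.comp_apply, LinearEquiv.coe_coe,
      hφl, hφr, hψl, hψr, hφl', hφr', hψl', hψr', hψφs, hφψs, hsψφ,
      hc1, hc2, hc3, hc4, hαm, hβm, hαm', hβm',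
      LinearEquiv.symm_apply_apply, LinearEquiv.apply_symm_apply]
  case phi_r =>
    intro x ξ
    refine LinearMap.ext fun u => ?_
    simp only [LinearMap.dualMap_apply, LinearMap.comp_apply, LinearEquiv.coe_coe,
      hφl, hφr, hψl, hψr, hφl', hφr', hψl', hψr', hψφs, hφψs, hsψφ,
      hc1, hc2, hc3, hc4, hαm, hβm, hαm', hβm',
      LinearEquiv.symm_apply_apply, LinearEquiv.apply_symm_apply]
  case psi_l =>
    intro x ξ
    refine LinearMap.ext fun u => ?_
    simp only [LinearMap.dualMap_apply, LinearMap.comp_apply, LinearEquiv.coe_coe,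
      hφl, hφr, hψl, hψr, hφl', hφr', hψl', hψr', hψφs, hφψs, hsψφ,
      hc1, hc2, hc3, hc4, hαm, hβm, hαm', hβm',
      LinearEquiv.symm_apply_apply, LinearEquiv.apply_symm_apply]
  case psi_r =>
    intro x ξ
    refine LinearMap.ext fun u => ?_
    simp only [LinearMap.dualMap_apply, LinearMap.comp_apply, LinearEquiv.coe_coe,
      hφl, hφr, hψl, hψr, hφl', hφr', hψl', hψr', hψφs, hφψs, hsψφ,
      hc1, hc2, hc3, hc4, hαm, hβm, hαm', hβm',
      LinearEquiv.symm_apply_apply, LinearEquiv.apply_symm_apply]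
  case phi_psi_comm =>
    intro ξ
    refine LinearMap.ext fun u => ?_
    simp only [LinearMap.dualMap_apply, LinearMap.comp_apply, LinearEquiv.coe_coe,
      hφl, hφr, hψl, hψr, hφl', hφr', hψl', hψr', hψφs, hφψs, hsψφ,
      hc1, hc2, hc3, hc4, hαm, hβm, hαm', hβm',
      LinearEquiv.symm_apply_apply, LinearEquiv.apply_symm_apply]
  case l_lin =>
    refine ⟨fun x y => ?_, fun c x => ?_⟩ <;>
    refine LinearMap.ext fun ξ => LinearMap.ext fun u => ?_ <;>
    simp only [map_add, map_smul, hrep.r_lin.map_add, hrep.r_lin.map_smul,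
      LinearMap.add_apply, LinearMap.smul_apply, LinearMap.dualMap_apply,
      LinearMap.comp_apply, LinearEquiv.coe_coe]
  case r_lin =>
    refine ⟨fun x y => ?_, fun c x => ?_⟩ <;>
    refine LinearMap.ext fun ξ => LinearMap.ext fun u => ?_ <;>
    simp only [map_add, map_smul, hrep.l_lin.map_add, hrep.l_lin.map_smul,
      LinearMap.add_apply, LinearMap.smul_apply, LinearMap.dualMap_apply,
      LinearMap.comp_apply, LinearEquiv.coe_coe]
  case rep1 =>
    intro x ξ
    refine LinearMap.ext fun u => ?_
    simp only [LinearMap.dualMap_apply, LinearMap.comp_apply, LinearEquiv.coe_coe,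
      hφl, hφr, hψl, hψr, hφl', hφr', hψl', hψr', hψφs, hφψs, hsψφ,
      hc1, hc2, hc3, hc4, hαm, hβm, hαm', hβm',
      LinearEquiv.symm_apply_apply, LinearEquiv.apply_symm_apply]
    have h := hrep.rep2 (α (β.symm (β.symm (β.symm x)))) (φ.symm (φ.symm (ψ.symm (ψ.symm u))))
    simp only [LinearMap.dualMap_apply, LinearMap.comp_apply, LinearEquiv.coe_coe,
      hφl, hφr, hψl, hψr, hφl', hφr', hψl', hψr', hψφs, hφψs, hsψφ,
      hc1, hc2, hc3, hc4, hαm, hβm, hαm', hβm',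
      LinearEquiv.symm_apply_apply, LinearEquiv.apply_symm_apply] at h
    exact congrArg ξ h
  case rep2 =>
    intro x ξ
    refine LinearMap.ext fun u => ?_
    simp only [LinearMap.dualMap_apply, LinearMap.comp_apply, LinearEquiv.coe_coe,
      hφl, hφr, hψl, hψr, hφl', hφr', hψl', hψr', hψφs, hφψs, hsψφ,
      hc1, hc2, hc3, hc4, hαm, hβm, hαm', hβm',
      LinearEquiv.symm_apply_apply, LinearEquiv.apply_symm_apply]
    have h := hrep.rep1 (α.symm (α.symm (α.symm (β x)))) (φ.symm (φ.symm (ψ.symm (ψ.symm u))))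
    simp only [LinearMap.dualMap_apply, LinearMap.comp_apply, LinearEquiv.coe_coe,
      hφl, hφr, hψl, hψr, hφl', hφr', hψl', hψr', hψφs, hφψs, hsψφ,
      hc1, hc2, hc3, hc4, hαm, hβm, hαm', hβm',
      LinearEquiv.symm_apply_apply, LinearEquiv.apply_symm_apply] at h
    exact congrArg ξ h
  case rep3 =>
    intro x y ξ
    refine LinearMap.ext fun u => ?_
    simp only [LinearMap.sub_apply, LinearMap.dualMap_apply, LinearMap.comp_apply,
      LinearEquiv.coe_coe]
    rw [← map_sub ξ, ← map_sub ξ]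
    congr 1
    simp only [LinearMap.dualMap_apply, LinearMap.comp_apply, LinearEquiv.coe_coe,
      hφl, hφr, hψl, hψr, hφl', hφr', hψl', hψr', hψφs, hφψs, hsψφ,
      hc1, hc2, hc3, hc4, hαm, hβm, hαm', hβm',
      LinearEquiv.symm_apply_apply, LinearEquiv.apply_symm_apply]
    have h1 := hrep.rep3 (α.symm (α.symm (α.symm (α.symm y)))) (β.symm (β.symm x))
      (φ.symm (φ.symm (φ.symm (φ.symm (ψ.symm (ψ.symm u))))))
    have h2 := hrep.rep4 (β.symm (α.symm (α.symm (α.symm y)))) (α.symm (α.symm x))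
      (φ.symm (φ.symm (φ.symm (ψ.symm (ψ.symm (ψ.symm u))))))
    have h3 := hrep.rep3 (β.symm (α.symm (α.symm x))) (β.symm (α.symm (α.symm y)))
      (φ.symm (φ.symm (φ.symm (φ.symm (ψ.symm (ψ.symm u))))))
    have h4 := hpolr (β.symm (α.symm (α.symm (α.symm y)))) (β.symm (β.symm (α.symm x)))
      (φ.symm (φ.symm (φ.symm (φ.symm (ψ.symm u)))))
    simp only [LinearMap.dualMap_apply, LinearMap.comp_apply, LinearEquiv.coe_coe,
      hφl, hφr, hψl, hψr, hφl', hφr', hψl', hψr', hψφs, hφψs, hsψφ,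
      hc1, hc2, hc3, hc4, hαm, hβm, hαm', hβm',
      LinearEquiv.symm_apply_apply, LinearEquiv.apply_symm_apply] at h1 h2 h3 h4
    linear_combination (norm := abel) h1 + h2 + h3 + h4
  case rep4 =>
    intro x y ξ
    refine LinearMap.ext fun u => ?_
    simp only [LinearMap.sub_apply, LinearMap.dualMap_apply, LinearMap.comp_apply,
      LinearEquiv.coe_coe]
    rw [← map_sub ξ, ← map_sub ξ]
    congr 1
    simp only [LinearMap.dualMap_apply, LinearMap.comp_apply, LinearEquiv.coe_coe,
      hφl, hφr, hψl, hψr, hφl', hφr', hψl', hψr', hψφs, hφψs, hsψφ,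
      hc1, hc2, hc3, hc4, hαm, hβm, hαm', hβm',
      LinearEquiv.symm_apply_apply, LinearEquiv.apply_symm_apply]
    have h1 := hrep.rep3 (α.symm (α.symm (β.symm x))) (β.symm (β.symm (β.symm (β.symm (α y)))))
      (φ.symm (φ.symm (φ.symm (ψ.symm (ψ.symm (ψ.symm u))))))
    have h4 := hpolr (β.symm (β.symm (α.symm x))) (β.symm (β.symm (β.symm (β.symm y))))
      (φ.symm (φ.symm (φ.symm (ψ.symm (ψ.symm u)))))
    simp only [LinearMap.dualMap_apply, LinearMap.comp_apply, LinearEquiv.coe_coe,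
      hφl, hφr, hψl, hψr, hφl', hφr', hψl', hψr', hψφs, hφψs, hsψφ,
      hc1, hc2, hc3, hc4, hαm, hβm, hαm', hβm',
      LinearEquiv.symm_apply_apply, LinearEquiv.apply_symm_apply] at h1 h4
    linear_combination (norm := abel) -h1 - h4
end

section
/- Let (V, ℓ, r, φ, ψ) be a representation of a BiHom-alternative algebra (A, μ, α, β) with α, β, φ, ψ invertible. Let ev: V → V** denote the canonical evaluation map into the double dual. Then the double dual construction recovers ℓ∘α⁻³β³ and r∘α³β⁻³: for all x ∈ A and u ∈ V, ev(u) ∘ (φψ)* ∘ ℓ^⋆(α⁻¹β²(x)) = ev(ℓ(α⁻³β³(x))(u)) and ev(u) ∘ (φψ)* ∘ r^⋆(α²β⁻¹(x)) = ev(r(α³β⁻³(x))(u)) as elements of V**. -/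
/-- The double dual construction recovers `ℓ∘α⁻³β³` and `r∘α³β⁻³`:
`ev(u) ∘ (φψ)* ∘ ℓ^⋆(α⁻¹β²(x)) = ev(ℓ(α⁻³β³(x))(u))` and
`ev(u) ∘ (φψ)* ∘ r^⋆(α²β⁻¹(x)) = ev(r(α³β⁻³(x))(u))` in `V**`, where
`⟨ℓ^⋆(x)(ξ), u⟩ = ⟨ξ, ℓ(α⁻²β(x))(φ⁻¹ψ⁻¹(u))⟩` and
`⟨r^⋆(x)(ξ), u⟩ = ⟨ξ, r(αβ⁻²(x))(φ⁻¹ψ⁻¹(u))⟩`. -/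
theorem double_dual_recovers_rep
    (K : Type*) [Field K] [CharZero K] {A V : Type*} [AddCommGroup A] [Module K A]
    [AddCommGroup V] [Module K V]
    (mul : A → A → A) (α β : A ≃ₗ[K] A) (halg : IsBiHomAlt K mul (⇑α) (⇑β))
    (l r : A → Module.End K V) (φ ψ : V ≃ₗ[K] V)
    (hrep : IsBiHomRep K mul (⇑α) (⇑β) l r φ.toLinearMap ψ.toLinearMap) :
    ∀ (x : A) (u : V),
      ((Module.Dual.eval K V u) ∘ₗ
        ((φ.toLinearMap ∘ₗ ψ.toLinearMap).dualMap ∘ₗ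
          ((l (α.symm (α.symm (β (α.symm (β (β x)))))) ∘ₗ
            (φ.symm.toLinearMap ∘ₗ ψ.symm.toLinearMap)).dualMap))
        = Module.Dual.eval K V
            (l (α.symm (α.symm (α.symm (β (β (β x)))))) u)) ∧
      ((Module.Dual.eval K V u) ∘ₗ
        ((φ.toLinearMap ∘ₗ ψ.toLinearMap).dualMap ∘ₗ
          ((r (α (β.symm (β.symm (α (α (β.symm x)))))) ∘ₗ
            (φ.symm.toLinearMap ∘ₗ ψ.symm.toLinearMap)).dualMap))
        = Module.Dual.eval K V
            (r (α (α (α (β.symm (β.symm (β.symm x)))))) u)) := by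
  intro x u
  have hcomm : ∀ y, β (α.symm y) = α.symm (β y) := fun y => by
    apply α.injective
    rw [halg.alpha_beta_comm]
    simp
  have hcomm' : ∀ y, α (β.symm y) = β.symm (α y) := fun y => by
    apply β.injective
    rw [← halg.alpha_beta_comm]
    simp
  have hfix : φ.symm (ψ.symm (φ (ψ u))) = u := by
    have h := hrep.phi_psi_comm u
    simp only [LinearEquiv.coe_coe] at h
    rw [h]
    simp
  constructor <;>
  · ext ξ
    simp only [LinearMap.coe_comp, Function.comp_apply, LinearMap.dualMap_apply',
      Module.Dual.eval_apply, LinearEquiv.coe_coe]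
    rw [hfix]
    congr 1
    simp only [hcomm, hcomm']
end

section
/- Let (A, μ, α, β) be a regular BiHom-alternative algebra (α and β invertible). Define L^⋆, R^⋆: A → End(A*) by ⟨L^⋆(x)(ξ), y⟩ = ⟨ξ, α⁻²β(x)·α⁻¹β⁻¹(y)⟩ and ⟨R^⋆(x)(ξ), y⟩ = ⟨ξ, α⁻¹β⁻¹(y)·αβ⁻²(x)⟩ for x, y ∈ A, ξ ∈ A*. Then (A*, R^⋆, L^⋆, (α⁻¹)*, (β⁻¹)*) — the tuple whose left-action maps are R^⋆, whose right-action maps are L^⋆, and whose structure maps are the transposes (α⁻¹)* and (β⁻¹)* — is a representation of (A, μ, α, β) (the coadjoint representation). -/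
section scratch
variable {K : Type*} [Field K] [CharZero K] {A : Type*} [AddCommGroup A] [Module K A]
variable (mul : A → A → A) (α β : A ≃ₗ[K] A)

lemma coadj_absymm (halg : IsBiHomAlt K mul (⇑α) (⇑β)) (x : A) :
    α (β.symm x) = β.symm (α x) := by
  apply β.injective
  rw [β.apply_symm_apply, ← halg.alpha_beta_comm, β.apply_symm_apply]

lemma coadj_asymmb (halg : IsBiHomAlt K mul (⇑α) (⇑β)) (x : A) :
    α.symm (β x) = β (α.symm x) := by
  apply α.injective
  rw [α.apply_symm_apply, halg.alpha_beta_comm, α.apply_symm_apply]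

lemma coadj_asbs (halg : IsBiHomAlt K mul (⇑α) (⇑β)) (x : A) :
    α.symm (β.symm x) = β.symm (α.symm x) := by
  apply α.injective
  rw [α.apply_symm_apply, coadj_absymm mul α β halg, α.apply_symm_apply]

lemma coadj_asymm_mul (halg : IsBiHomAlt K mul (⇑α) (⇑β)) (x y : A) :
    α.symm (mul x y) = mul (α.symm x) (α.symm y) := by
  apply α.injective
  rw [α.apply_symm_apply, halg.alpha_mul, α.apply_symm_apply, α.apply_symm_apply]

lemma coadj_bsymm_mul (halg : IsBiHomAlt K mul (⇑α) (⇑β)) (x y : A) :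
    β.symm (mul x y) = mul (β.symm x) (β.symm y) := by
  apply β.injective
  rw [β.apply_symm_apply, halg.beta_mul, β.apply_symm_apply, β.apply_symm_apply]

end scratch

section scratch2
set_option linter.unusedSectionVars false
variable {K : Type*} [Field K] [CharZero K] {A : Type*} [AddCommGroup A] [Module K A]
variable (mul : A → A → A) (α β : A ≃ₗ[K] A)

lemma coadj_halve (K : Type*) [Field K] [CharZero K] {A : Type*} [AddCommGroup A]
    [Module K A] {a : A} (h : a + a = 0) : a = 0 := by
  have h2 : (2 : K) • a = 0 := by rw [two_smul]; exact h
  rcases smul_eq_zero.mp h2 with h | h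
  · exact absurd h two_ne_zero
  · exact h

lemma alt_l (halg : IsBiHomAlt K mul (⇑α) (⇑β)) (x z : A) :
    biAssoc mul (⇑α) (⇑β) (β x) (α x) z = 0 :=
  coadj_halve K (halg.left_alt x x z)

lemma alt_r (halg : IsBiHomAlt K mul (⇑α) (⇑β)) (x z : A) :
    biAssoc mul (⇑α) (⇑β) x (β z) (α z) = 0 :=
  coadj_halve K (halg.right_alt x z z)

lemma sigma12 (halg : IsBiHomAlt K mul (⇑α) (⇑β)) (u v w : A) :
    biAssoc mul (⇑α) (⇑β) u v w
      = - biAssoc mul (⇑α) (⇑β) (β (α.symm v)) (α (β.symm u)) w := by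
  have h := halg.left_alt (β.symm u) (α.symm v) w
  rw [β.apply_symm_apply, α.apply_symm_apply] at h
  exact eq_neg_of_add_eq_zero_left h

lemma sigma23 (halg : IsBiHomAlt K mul (⇑α) (⇑β)) (u v w : A) :
    biAssoc mul (⇑α) (⇑β) u v w
      = - biAssoc mul (⇑α) (⇑β) u (β (α.symm w)) (α (β.symm v)) := by
  have h := halg.right_alt u (β.symm v) (α.symm w)
  rw [β.apply_symm_apply, α.apply_symm_apply] at h
  exact eq_neg_of_add_eq_zero_left h

lemma sigma13 (halg : IsBiHomAlt K mul (⇑α) (⇑β)) (u v w : A) :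
    biAssoc mul (⇑α) (⇑β) u v w
      = - biAssoc mul (⇑α) (⇑β) (β (β (α.symm (α.symm w)))) v
          (α (α (β.symm (β.symm u)))) := by
  rw [sigma12 mul α β halg, sigma23 mul α β halg, sigma12 mul α β halg]
  simp only [neg_neg, coadj_absymm mul α β halg, coadj_asymmb mul α β halg,
    coadj_asbs mul α β halg, LinearEquiv.apply_symm_apply, LinearEquiv.symm_apply_apply]

end scratch2

set_option maxHeartbeats 1000000 in
/-- The coadjoint representation: for a regular BiHom-alternative algebra
`(A, μ, α, β)`, the tuple `(A*, R^⋆, L^⋆, (α⁻¹)*, (β⁻¹)*)` is a representation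
of `(A, μ, α, β)`, where `⟨L^⋆(x)(ξ), y⟩ = ⟨ξ, α⁻²β(x)·α⁻¹β⁻¹(y)⟩` and
`⟨R^⋆(x)(ξ), y⟩ = ⟨ξ, α⁻¹β⁻¹(y)·αβ⁻²(x)⟩`. -/
theorem coadjoint_isBiHomRep
    (K : Type*) [Field K] [CharZero K] {A : Type*} [AddCommGroup A] [Module K A]
    (mul : A → A → A) (α β : A ≃ₗ[K] A) (halg : IsBiHomAlt K mul (⇑α) (⇑β)) :
    IsBiHomRep K mul (⇑α) (⇑β)
      -- left-action maps: R^⋆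
      (fun x => ((IsLinearMap.mk' (fun z => mul z (α (β.symm (β.symm x))))
          (halg.mul_lin_left (α (β.symm (β.symm x))))) ∘ₗ
            (α.symm.toLinearMap ∘ₗ β.symm.toLinearMap)).dualMap)
      -- right-action maps: L^⋆
      (fun x => ((IsLinearMap.mk' (mul (α.symm (α.symm (β x))))
          (halg.mul_lin_right (α.symm (α.symm (β x))))) ∘ₗ
            (α.symm.toLinearMap ∘ₗ β.symm.toLinearMap)).dualMap)
      α.symm.toLinearMap.dualMap β.symm.toLinearMap.dualMap := by
  constructor
  case l_lin =>
    refine ⟨fun x y => ?_, fun c x => ?_⟩ <;> ext v z <;>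
      simp [map_add, map_smul, LinearMap.add_apply, LinearMap.smul_apply,
        (halg.mul_lin_right (α.symm (β.symm z))).map_add,
        (halg.mul_lin_right (α.symm (β.symm z))).map_smul]
  case r_lin =>
    refine ⟨fun x y => ?_, fun c x => ?_⟩ <;> ext v z <;>
      simp [map_add, map_smul, LinearMap.add_apply, LinearMap.smul_apply,
        (halg.mul_lin_left (α.symm (β.symm z))).map_add,
        (halg.mul_lin_left (α.symm (β.symm z))).map_smul]
  case phi_psi_comm =>
    intro v
    ext z
    simp only [LinearMap.dualMap_apply, LinearMap.coe_comp, Function.comp_apply,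
      LinearEquiv.coe_coe, IsLinearMap.mk'_apply, LinearMap.sub_apply, map_sub,
      halg.alpha_mul, halg.beta_mul, coadj_asymm_mul mul α β halg,
      coadj_bsymm_mul mul α β halg, halg.alpha_beta_comm,
      coadj_absymm mul α β halg, coadj_asymmb mul α β halg, coadj_asbs mul α β halg,
      LinearEquiv.apply_symm_apply, LinearEquiv.symm_apply_apply]
  case phi_l =>
    intro x v
    ext z
    simp only [LinearMap.dualMap_apply, LinearMap.coe_comp, Function.comp_apply,
      LinearEquiv.coe_coe, IsLinearMap.mk'_apply, LinearMap.sub_apply, map_sub,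
      halg.alpha_mul, halg.beta_mul, coadj_asymm_mul mul α β halg,
      coadj_bsymm_mul mul α β halg, halg.alpha_beta_comm,
      coadj_absymm mul α β halg, coadj_asymmb mul α β halg, coadj_asbs mul α β halg,
      LinearEquiv.apply_symm_apply, LinearEquiv.symm_apply_apply]
  case phi_r =>
    intro x v
    ext z
    simp only [LinearMap.dualMap_apply, LinearMap.coe_comp, Function.comp_apply,
      LinearEquiv.coe_coe, IsLinearMap.mk'_apply, LinearMap.sub_apply, map_sub,
      halg.alpha_mul, halg.beta_mul, coadj_asymm_mul mul α β halg,
      coadj_bsymm_mul mul α β halg, halg.alpha_beta_comm,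
      coadj_absymm mul α β halg, coadj_asymmb mul α β halg, coadj_asbs mul α β halg,
      LinearEquiv.apply_symm_apply, LinearEquiv.symm_apply_apply]
  case psi_l =>
    intro x v
    ext z
    simp only [LinearMap.dualMap_apply, LinearMap.coe_comp, Function.comp_apply,
      LinearEquiv.coe_coe, IsLinearMap.mk'_apply, LinearMap.sub_apply, map_sub,
      halg.alpha_mul, halg.beta_mul, coadj_asymm_mul mul α β halg,
      coadj_bsymm_mul mul α β halg, halg.alpha_beta_comm,
      coadj_absymm mul α β halg, coadj_asymmb mul α β halg, coadj_asbs mul α β halg,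
      LinearEquiv.apply_symm_apply, LinearEquiv.symm_apply_apply]
  case psi_r =>
    intro x v
    ext z
    simp only [LinearMap.dualMap_apply, LinearMap.coe_comp, Function.comp_apply,
      LinearEquiv.coe_coe, IsLinearMap.mk'_apply, LinearMap.sub_apply, map_sub,
      halg.alpha_mul, halg.beta_mul, coadj_asymm_mul mul α β halg,
      coadj_bsymm_mul mul α β halg, halg.alpha_beta_comm,
      coadj_absymm mul α β halg, coadj_asymmb mul α β halg, coadj_asbs mul α β halg,
      LinearEquiv.apply_symm_apply, LinearEquiv.symm_apply_apply]
  case rep1 =>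
    intro x v
    ext z
    have h := alt_r mul α β halg (β.symm (β.symm (α.symm (α.symm z))))
      (β.symm (β.symm (β.symm (α x))))
    rw [biAssoc, sub_eq_zero] at h
    simp only [LinearMap.dualMap_apply, LinearMap.coe_comp, Function.comp_apply,
      LinearEquiv.coe_coe, IsLinearMap.mk'_apply, LinearMap.sub_apply, map_sub,
      halg.alpha_mul, halg.beta_mul, coadj_asymm_mul mul α β halg,
      coadj_bsymm_mul mul α β halg, halg.alpha_beta_comm,
      coadj_absymm mul α β halg, coadj_asymmb mul α β halg, coadj_asbs mul α β halg,
      LinearEquiv.apply_symm_apply, LinearEquiv.symm_apply_apply] at h ⊢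
    rw [← h]
  case rep2 =>
    intro x v
    ext z
    have h := alt_l mul α β halg (β (α.symm (α.symm (α.symm x))))
      (β.symm (β.symm (α.symm (α.symm z))))
    rw [biAssoc, sub_eq_zero] at h
    simp only [LinearMap.dualMap_apply, LinearMap.coe_comp, Function.comp_apply,
      LinearEquiv.coe_coe, IsLinearMap.mk'_apply, LinearMap.sub_apply, map_sub,
      halg.alpha_mul, halg.beta_mul, coadj_asymm_mul mul α β halg,
      coadj_bsymm_mul mul α β halg, halg.alpha_beta_comm,
      coadj_absymm mul α β halg, coadj_asymmb mul α β halg, coadj_asbs mul α β halg,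
      LinearEquiv.apply_symm_apply, LinearEquiv.symm_apply_apply] at h ⊢
    rw [h]

  case rep3 =>
    intro x y v
    ext z
    have h := (sigma13 mul α β halg (α.symm (α.symm x)) (α.symm (α.symm (α.symm y)))
        (β.symm (β.symm (β.symm (α.symm (α.symm z)))))).trans
      (congrArg Neg.neg (sigma12 mul α β halg _ _ _))
    rw [neg_neg] at h
    simp only [biAssoc, LinearMap.dualMap_apply, LinearMap.coe_comp, Function.comp_apply,
      LinearEquiv.coe_coe, IsLinearMap.mk'_apply, LinearMap.sub_apply, map_sub,
      halg.alpha_mul, halg.beta_mul, coadj_asymm_mul mul α β halg,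
      coadj_bsymm_mul mul α β halg, halg.alpha_beta_comm,
      coadj_absymm mul α β halg, coadj_asymmb mul α β halg, coadj_asbs mul α β halg,
      LinearEquiv.apply_symm_apply, LinearEquiv.symm_apply_apply] at h
    simp only [LinearMap.dualMap_apply, LinearMap.coe_comp, Function.comp_apply,
      LinearEquiv.coe_coe, IsLinearMap.mk'_apply, LinearMap.sub_apply, map_sub,
      halg.alpha_mul, halg.beta_mul, coadj_asymm_mul mul α β halg,
      coadj_bsymm_mul mul α β halg, halg.alpha_beta_comm,
      coadj_absymm mul α β halg, coadj_asymmb mul α β halg, coadj_asbs mul α β halg,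
      LinearEquiv.apply_symm_apply, LinearEquiv.symm_apply_apply]
    rw [← map_sub, ← map_sub]
    exact congrArg v h.symm

  case rep4 =>
    intro x y v
    ext z
    have h := (sigma23 mul α β halg (α.symm (α.symm x))
        (β.symm (β.symm (β.symm (α.symm (α.symm z)))))
        (β.symm (β.symm (β.symm (β.symm (α y)))))).trans
      (congrArg Neg.neg (sigma13 mul α β halg _ _ _))
    rw [neg_neg] at h
    have h2 := congrArg (fun t : A => -t) h
    simp only [biAssoc, neg_sub, LinearMap.dualMap_apply, LinearMap.coe_comp, Function.comp_apply,
      LinearEquiv.coe_coe, IsLinearMap.mk'_apply, LinearMap.sub_apply, map_sub,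
      halg.alpha_mul, halg.beta_mul, coadj_asymm_mul mul α β halg,
      coadj_bsymm_mul mul α β halg, halg.alpha_beta_comm,
      coadj_absymm mul α β halg, coadj_asymmb mul α β halg, coadj_asbs mul α β halg,
      LinearEquiv.apply_symm_apply, LinearEquiv.symm_apply_apply] at h2
    simp only [LinearMap.dualMap_apply, LinearMap.coe_comp, Function.comp_apply,
      LinearEquiv.coe_coe, IsLinearMap.mk'_apply, LinearMap.sub_apply, map_sub,
      halg.alpha_mul, halg.beta_mul, coadj_asymm_mul mul α β halg,
      coadj_bsymm_mul mul α β halg, halg.alpha_beta_comm,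
      coadj_absymm mul α β halg, coadj_asymmb mul α β halg, coadj_asbs mul α β halg,
      LinearEquiv.apply_symm_apply, LinearEquiv.symm_apply_apply]
    rw [← map_sub, ← map_sub]
    exact congrArg v h2
end

section
/- Let (A, μ, α, β) be a regular BiHom-alternative algebra (α and β invertible) and let L^⋆, R^⋆: A → End(A*) be the coadjoint actions given by ⟨L^⋆(x)(ξ), y⟩ = ⟨ξ, α⁻²β(x)·α⁻¹β⁻¹(y)⟩ and ⟨R^⋆(x)(ξ), y⟩ = ⟨ξ, α⁻¹β⁻¹(y)·αβ⁻²(x)⟩. Then the direct sum A ⊕ A* with product μ_{A⊕A*}(x+ξ, y+η) = μ(x,y) + R^⋆(x)(η) + L^⋆(y)(ξ) and structure maps α⊕(α⁻¹)* and β⊕(β⁻¹)* is a BiHom-alternative algebra. -/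
section Aux
variable {K : Type*} [Field K] {A : Type*} [AddCommGroup A] [Module K A]
variable {mul : A → A → A} {α β : A ≃ₗ[K] A}

namespace BiHomAux

variable (halg : IsBiHomAlt K mul (⇑α) (⇑β))
include halg

lemma asm_mul (x y : A) : α.symm (mul x y) = mul (α.symm x) (α.symm y) := by
  apply α.injective; rw [halg.alpha_mul]; simp

lemma bsm_mul (x y : A) : β.symm (mul x y) = mul (β.symm x) (β.symm y) := by
  apply β.injective; rw [halg.beta_mul]; simp

lemma b_a (x : A) : β (α x) = α (β x) := (halg.alpha_beta_comm x).symm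

lemma b_asm (x : A) : β (α.symm x) = α.symm (β x) := by
  apply α.injective; rw [halg.alpha_beta_comm]; simp

lemma bsm_a (x : A) : β.symm (α x) = α (β.symm x) := by
  apply β.injective; rw [← halg.alpha_beta_comm]; simp

lemma bsm_asm (x : A) : β.symm (α.symm x) = α.symm (β.symm x) := by
  apply β.injective
  rw [show β (β.symm (α.symm x)) = α.symm x from β.apply_symm_apply _, BiHomAux.b_asm halg]
  simp

lemma map_biAssoc_a (x y z : A) :
    α (biAssoc mul (⇑α) (⇑β) x y z) = biAssoc mul (⇑α) (⇑β) (α x) (α y) (α z) := by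
  simp only [biAssoc, map_sub, halg.alpha_mul, BiHomAux.b_a halg]

lemma map_biAssoc_b (x y z : A) :
    β (biAssoc mul (⇑α) (⇑β) x y z) = biAssoc mul (⇑α) (⇑β) (β x) (β y) (β z) := by
  simp only [biAssoc, map_sub, halg.beta_mul, BiHomAux.b_a halg]

lemma map_biAssoc_asm (x y z : A) :
    α.symm (biAssoc mul (⇑α) (⇑β) x y z)
      = biAssoc mul (⇑α) (⇑β) (α.symm x) (α.symm y) (α.symm z) := by
  apply α.injective; rw [map_biAssoc_a halg]; simp

lemma map_biAssoc_bsm (x y z : A) :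
    β.symm (biAssoc mul (⇑α) (⇑β) x y z)
      = biAssoc mul (⇑α) (⇑β) (β.symm x) (β.symm y) (β.symm z) := by
  apply β.injective; rw [map_biAssoc_b halg]; simp

/-- Rotation: `as(x,y,z) = as(α⁻²β²z, αβ⁻¹x, αβ⁻¹y)`. -/
lemma rot (x y z : A) :
    biAssoc mul (⇑α) (⇑β) x y z
      = biAssoc mul (⇑α) (⇑β)
          (α.symm (α.symm (β (β z)))) (α (β.symm x)) (α (β.symm y)) := by
  have I1 := halg.left_alt (β.symm x) (α.symm y) z
  have I2 := halg.right_alt (β (α.symm y)) (β.symm (α (β.symm x))) (α.symm z)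
  have I3 := halg.left_alt (α.symm y) (α.symm (β (α.symm z))) (α (α (β.symm (β.symm x))))
  have I4 := halg.right_alt (α.symm (α.symm (β (β z)))) (β.symm y) (α (β.symm (β.symm x)))
  simp only [LinearEquiv.apply_symm_apply, LinearEquiv.symm_apply_apply,
    BiHomAux.b_a halg, BiHomAux.b_asm halg, BiHomAux.bsm_a halg, BiHomAux.bsm_asm halg] at I1 I2 I3 I4 ⊢
  linear_combination (norm := module) I1 - I2 + I3 - I4

/-- Key cyclic identity: `α⁻¹ as(a, b, αβ⁻²c) = β⁻¹ as(α⁻²βc, a, b)`. -/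
lemma key (a b c : A) :
    α.symm (biAssoc mul (⇑α) (⇑β) a b (α (β.symm (β.symm c))))
      = β.symm (biAssoc mul (⇑α) (⇑β) (α.symm (α.symm (β c))) a b) := by
  conv_rhs => rw [rot halg, rot halg]
  rw [map_biAssoc_asm halg, map_biAssoc_bsm halg]
  simp only [LinearEquiv.apply_symm_apply, LinearEquiv.symm_apply_apply,
    BiHomAux.b_a halg, BiHomAux.b_asm halg, BiHomAux.bsm_a halg, BiHomAux.bsm_asm halg]

end BiHomAux
end Aux

/-- The semidirect product of a regular BiHom-alternative algebra with its
coadjoint representation: `A ⊕ A*` with product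
`μ(x,y) + R^⋆(x)(η) + L^⋆(y)(ξ)` and structure maps `α⊕(α⁻¹)*`, `β⊕(β⁻¹)*`
is a BiHom-alternative algebra. -/
theorem semidirect_coadjoint_isBiHomAlt
    (K : Type*) [Field K] [CharZero K] {A : Type*} [AddCommGroup A] [Module K A]
    (mul : A → A → A) (α β : A ≃ₗ[K] A) (halg : IsBiHomAlt K mul (⇑α) (⇑β)) :
    IsBiHomAlt K
      (fun p q : A × Module.Dual K A =>
        (mul p.1 q.1,
          -- R^⋆(p.1)(q.2)
          ((IsLinearMap.mk' (fun z => mul z (α (β.symm (β.symm p.1))))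
            (halg.mul_lin_left (α (β.symm (β.symm p.1))))) ∘ₗ
              (α.symm.toLinearMap ∘ₗ β.symm.toLinearMap)).dualMap q.2
          +
          -- L^⋆(q.1)(p.2)
          ((IsLinearMap.mk' (mul (α.symm (α.symm (β q.1))))
            (halg.mul_lin_right (α.symm (α.symm (β q.1))))) ∘ₗ
              (α.symm.toLinearMap ∘ₗ β.symm.toLinearMap)).dualMap p.2))
      (fun p => (α p.1, α.symm.toLinearMap.dualMap p.2))
      (fun p => (β p.1, β.symm.toLinearMap.dualMap p.2)) := by
  have hml : ∀ a b c : A, mul (a + b) c = mul a c + mul b c :=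
    fun a b c => (halg.mul_lin_left c).map_add a b
  have hmls : ∀ (k : K) (a c : A), mul (k • a) c = k • mul a c :=
    fun k a c => (halg.mul_lin_left c).map_smul k a
  have hmr : ∀ a b c : A, mul a (b + c) = mul a b + mul a c :=
    fun a b c => (halg.mul_lin_right a).map_add b c
  have hmrs : ∀ (k : K) (a c : A), mul a (k • c) = k • mul a c :=
    fun k a c => (halg.mul_lin_right a).map_smul k c
  refine ⟨⟨?_, ?_, ?_, ?_, ?_, ?_, ?_⟩, ?_, ?_⟩
  · -- mul_lin_left
    intro q
    constructor
    · intro p p'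
      refine Prod.ext (hml _ _ _) ?_
      ext w
      simp [map_add, hmr, hml]
      ring
    · intro k p
      refine Prod.ext (hmls _ _ _) ?_
      ext w
      simp [map_smul, hmrs, hmls]
  · -- mul_lin_right
    intro p
    constructor
    · intro q q'
      refine Prod.ext (hmr _ _ _) ?_
      ext w
      simp [map_add, hmr, hml]
      ring
    · intro k q

      refine Prod.ext (hmrs _ _ _) ?_
      ext w
      simp [map_smul, hmrs, hmls]
  · -- alpha_lin
    exact ⟨fun p q => by refine Prod.ext (by simp) ?_; ext w; simp,
      fun k p => by refine Prod.ext (by simp) ?_; ext w; simp⟩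
  · -- beta_lin
    exact ⟨fun p q => by refine Prod.ext (by simp) ?_; ext w; simp,
      fun k p => by refine Prod.ext (by simp) ?_; ext w; simp⟩
  · -- alpha_beta_comm
    intro p
    refine Prod.ext (BiHomAux.b_a halg _).symm ?_
    ext w
    simp [BiHomAux.bsm_asm halg]
  · -- alpha_mul
    intro p q
    refine Prod.ext (halg.alpha_mul _ _) ?_
    ext w
    simp [BiHomAux.asm_mul halg, BiHomAux.bsm_mul halg, BiHomAux.b_a halg, BiHomAux.b_asm halg, BiHomAux.bsm_a halg, BiHomAux.bsm_asm halg]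
  · -- beta_mul
    intro p q
    refine Prod.ext (halg.beta_mul _ _) ?_
    ext w
    simp [BiHomAux.asm_mul halg, BiHomAux.bsm_mul halg, BiHomAux.b_a halg, BiHomAux.b_asm halg, BiHomAux.bsm_a halg, BiHomAux.bsm_asm halg]
  · -- left_alt
    intro p q r
    refine Prod.ext ?_ ?_
    · simpa [biAssoc] using halg.left_alt p.1 q.1 r.1
    · ext w
      simp only [biAssoc, Prod.fst_add, Prod.fst_sub, Prod.snd_add, Prod.snd_sub,
        LinearMap.add_apply, LinearMap.sub_apply, LinearMap.dualMap_apply,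
        LinearMap.coe_comp, Function.comp_apply, LinearEquiv.coe_coe,
        IsLinearMap.mk'_apply, map_add, map_sub, LinearMap.zero_apply]
      have hz := congrArg r.2 (halg.right_alt (α.symm (α.symm (β.symm (β.symm w))))
        (α (β.symm (β.symm (β.symm p.1)))) (α (β.symm (β.symm (β.symm q.1)))))
      have he := congrArg q.2 (BiHomAux.key halg (α.symm (α.symm (α.symm (β r.1))))
        (α.symm (α.symm (β.symm (β.symm w)))) p.1)
      have hx := congrArg p.2 (BiHomAux.key halg (α.symm (α.symm (α.symm (β r.1))))
        (α.symm (α.symm (β.symm (β.symm w)))) q.1)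
      simp only [biAssoc, map_add, map_sub, map_zero, halg.alpha_mul, halg.beta_mul,
        BiHomAux.asm_mul halg, BiHomAux.bsm_mul halg, BiHomAux.b_a halg, BiHomAux.b_asm halg, BiHomAux.bsm_a halg, BiHomAux.bsm_asm halg,
        LinearEquiv.apply_symm_apply, LinearEquiv.symm_apply_apply, Prod.snd_zero,
        LinearMap.zero_apply] at hz he hx ⊢
      linear_combination he + hx - hz
  · -- right_alt
    intro p q r
    refine Prod.ext ?_ ?_
    · simpa [biAssoc] using halg.right_alt p.1 q.1 r.1
    · ext w
      simp only [biAssoc, Prod.fst_add, Prod.fst_sub, Prod.snd_add, Prod.snd_sub,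
        LinearMap.add_apply, LinearMap.sub_apply, LinearMap.dualMap_apply,
        LinearMap.coe_comp, Function.comp_apply, LinearEquiv.coe_coe,
        IsLinearMap.mk'_apply, map_add, map_sub, LinearMap.zero_apply]
      have hx := congrArg p.2 (halg.left_alt (α.symm (α.symm (α.symm (β q.1))))
        (α.symm (α.symm (α.symm (β r.1)))) (α.symm (α.symm (β.symm (β.symm w)))))
      have he := congrArg q.2 (BiHomAux.key halg (α.symm (α.symm (β.symm (β.symm w))))
        (α (β.symm (β.symm (β.symm p.1)))) r.1)
      have hz := congrArg r.2 (BiHomAux.key halg (α.symm (α.symm (β.symm (β.symm w))))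
        (α (β.symm (β.symm (β.symm p.1)))) q.1)
      simp only [biAssoc, map_add, map_sub, map_zero, halg.alpha_mul, halg.beta_mul,
        BiHomAux.asm_mul halg, BiHomAux.bsm_mul halg, BiHomAux.b_a halg, BiHomAux.b_asm halg, BiHomAux.bsm_a halg, BiHomAux.bsm_asm halg,
        LinearEquiv.apply_symm_apply, LinearEquiv.symm_apply_apply, Prod.snd_zero,
        LinearMap.zero_apply] at hz he hx ⊢
      linear_combination -he - hz - hx
end

section
/- Let (A, μ, α, β) be a BiHom-alternative algebra, (V, ℓ, r, φ, ψ) a representation of it, and θ: A × A → V a bilinear map. Define on A ⊕ V the product (x+u) ∘ (y+v) = xy + ℓ(x)v + r(y)u + θ(x,y) and structure maps α+φ, β+ψ. Then (A ⊕ V, ∘, α+φ, β+ψ) is a BiHom-alternative algebra if and only if for all x, y, z ∈ A: (1) φ(θ(x,y)) = θ(α(x),α(y)) and ψ(θ(x,y)) = θ(β(x),β(y)); (2) θ(β(x)α(y),β(z)) + r(β(z))θ(β(x),α(y)) − θ(αβ(x),α(y)z) − ℓ(αβ(x))θ(α(y),z) + θ(β(y)α(x),β(z)) + r(β(z))θ(β(y),α(x))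 − θ(αβ(y),α(x)z) − ℓ(αβ(y))θ(α(x),z) = 0; (3) θ(xβ(y),αβ(z)) + r(αβ(z))θ(x,β(y)) − θ(α(x),β(y)α(z)) − ℓ(α(x))θ(β(y),α(z)) + θ(xβ(z),αβ(y)) + r(αβ(y))θ(x,β(z)) − θ(α(x),β(z)α(y)) − ℓ(α(x))θ(β(z),α(y)) = 0. -/
/-- The `T_θ`-extension: given a BiHom-alternative algebra `(A, μ, α, β)`, a
representation `(V, ℓ, r, φ, ψ)` and a bilinear map `θ : A × A → V`, the space
`A ⊕ V` with product `(x+u)∘(y+v) = xy + ℓ(x)v + r(y)u + θ(x,y)` and structure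
maps `α+φ`, `β+ψ` is a BiHom-alternative algebra iff `θ` satisfies the stated
cocycle conditions. -/
theorem T_theta_extension_isBiHomAlt_iff
    (K : Type*) [Field K] [CharZero K] {A V : Type*} [AddCommGroup A] [Module K A]
    [AddCommGroup V] [Module K V]
    (mul : A → A → A) (α β : A → A) (halg : IsBiHomAlt K mul α β)
    (l r : A → Module.End K V) (φ ψ : Module.End K V)
    (hrep : IsBiHomRep K mul α β l r φ ψ)
    (θ : A → A → V) (hθl : ∀ y, IsLinearMap K fun x => θ x y)
    (hθr : ∀ x, IsLinearMap K (θ x)) :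
    IsBiHomAlt K
      (fun p q : A × V => (mul p.1 q.1, l p.1 q.2 + r q.1 p.2 + θ p.1 q.1))
      (fun p => (α p.1, φ p.2)) (fun p => (β p.1, ψ p.2)) ↔
    ((∀ x y, φ (θ x y) = θ (α x) (α y)) ∧
     (∀ x y, ψ (θ x y) = θ (β x) (β y)) ∧
     (∀ x y z,
       θ (mul (β x) (α y)) (β z) + r (β z) (θ (β x) (α y))
         - θ (α (β x)) (mul (α y) z) - l (α (β x)) (θ (α y) z)
         + θ (mul (β y) (α x)) (β z) + r (β z) (θ (β y) (α x))
         - θ (α (β y)) (mul (α x) z) - l (α (β y)) (θ (α x) z) = 0) ∧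
     (∀ x y z,
       θ (mul x (β y)) (α (β z)) + r (α (β z)) (θ x (β y))
         - θ (α x) (mul (β y) (α z)) - l (α x) (θ (β y) (α z))
         + θ (mul x (β z)) (α (β y)) + r (α (β y)) (θ x (β z))
         - θ (α x) (mul (β z) (α y)) - l (α x) (θ (β z) (α y)) = 0)) := by
  constructor
  · intro H
    refine ⟨?_, ?_, ?_, ?_⟩
    · intro x y
      have h := congrArg Prod.snd (H.alpha_mul ((x, 0) : A × V) ((y, 0) : A × V))
      simpa using h
    · intro x y
      have h := congrArg Prod.snd (H.beta_mul ((x, 0) : A × V) ((y, 0) : A × V))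
      simpa using h
    · intro x y z
      have h := congrArg Prod.snd (H.left_alt ((x, 0) : A × V) ((y, 0) : A × V) ((z, 0) : A × V))
      simp [biAssoc, Prod.ext_iff] at h
      linear_combination (norm := abel) h
    · intro x y z
      have h := congrArg Prod.snd (H.right_alt ((x, 0) : A × V) ((y, 0) : A × V) ((z, 0) : A × V))
      simp [biAssoc, Prod.ext_iff, ← halg.alpha_beta_comm] at h
      linear_combination (norm := abel) h
  · rintro ⟨h1, h2, h3, h4⟩
    have mulL : ∀ a b c, mul (a + b) c = mul a c + mul b c :=
      fun a b c => (halg.mul_lin_left c).map_add a b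
    have mulR : ∀ a b c, mul a (b + c) = mul a b + mul a c :=
      fun a b c => (halg.mul_lin_right a).map_add b c
    have lL : ∀ a b, l (a + b) = l a + l b := hrep.l_lin.map_add
    have rL : ∀ a b, r (a + b) = r a + r b := hrep.r_lin.map_add
    have hw : ∀ x y w, l (mul (β x) (α y)) (ψ w) + l (mul (β y) (α x)) (ψ w)
        = l (α (β x)) (l (α y) w) + l (α (β y)) (l (α x) w) := by
      intro x y w
      have ha := hrep.rep1 (x + y) w
      simp only [halg.beta_lin.map_add, halg.alpha_lin.map_add, mulL, mulR, lL,
        LinearMap.add_apply, map_add] at ha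
      linear_combination (norm := abel) ha - hrep.rep1 x w - hrep.rep1 y w
    have hw2 : ∀ x y u, r (mul (β x) (α y)) (φ u) + r (mul (β y) (α x)) (φ u)
        = r (α (β x)) (r (β x) u) + r (α (β y)) (r (β y) u) + (r (α (β x)) (r (β y) u)
          + r (α (β y)) (r (β x) u)) - r (mul (β x) (α x)) (φ u) - r (mul (β y) (α y)) (φ u) := by
      intro x y u
      have ha := hrep.rep2 (x + y) u
      simp only [halg.beta_lin.map_add, halg.alpha_lin.map_add, mulL, mulR, rL,
        LinearMap.add_apply, map_add] at ha
      linear_combination (norm := abel) ha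
    have hw2' : ∀ x y u, r (mul (β x) (α y)) (φ u) + r (mul (β y) (α x)) (φ u)
        = r (α (β x)) (r (β y) u) + r (α (β y)) (r (β x) u) := by
      intro x y u
      linear_combination (norm := abel) hw2 x y u - hrep.rep2 x u - hrep.rep2 y u
    refine ⟨⟨?_, ?_, ?_, ?_, ?_, ?_, ?_⟩, ?_, ?_⟩
    · intro q
      refine ⟨fun p p' => ?_, fun c p => ?_⟩
      · refine Prod.ext ?_ ?_
        · exact (halg.mul_lin_left q.1).map_add p.1 p'.1
        · simp only [Prod.fst_add, Prod.snd_add, lL, LinearMap.add_apply, map_add,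
            (hθl q.1).map_add]
          abel
      · refine Prod.ext ?_ ?_
        · exact (halg.mul_lin_left q.1).map_smul c p.1
        · simp only [Prod.smul_fst, Prod.smul_snd, hrep.l_lin.map_smul,
            LinearMap.smul_apply, map_smul, (hθl q.1).map_smul, smul_add]
    · intro p
      refine ⟨fun q q' => ?_, fun c q => ?_⟩
      · refine Prod.ext ?_ ?_
        · exact (halg.mul_lin_right p.1).map_add q.1 q'.1
        · simp only [Prod.fst_add, Prod.snd_add, rL, LinearMap.add_apply, map_add,
            (hθr p.1).map_add]
          abel
      · refine Prod.ext ?_ ?_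
        · exact (halg.mul_lin_right p.1).map_smul c q.1
        · simp only [Prod.smul_fst, Prod.smul_snd, hrep.r_lin.map_smul,
            LinearMap.smul_apply, map_smul, (hθr p.1).map_smul, smul_add]
    · exact ⟨fun p p' => Prod.ext (halg.alpha_lin.map_add p.1 p'.1) (map_add φ p.2 p'.2),
        fun c p => Prod.ext (halg.alpha_lin.map_smul c p.1) (map_smul φ c p.2)⟩
    · exact ⟨fun p p' => Prod.ext (halg.beta_lin.map_add p.1 p'.1) (map_add ψ p.2 p'.2),
        fun c p => Prod.ext (halg.beta_lin.map_smul c p.1) (map_smul ψ c p.2)⟩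
    · exact fun p => Prod.ext (halg.alpha_beta_comm p.1) (hrep.phi_psi_comm p.2)
    · intro p q
      refine Prod.ext (halg.alpha_mul p.1 q.1) ?_
      simp [map_add, hrep.phi_l, hrep.phi_r, h1]
    · intro p q
      refine Prod.ext (halg.beta_mul p.1 q.1) ?_
      simp [map_add, hrep.psi_l, hrep.psi_r, h2]
    · intro p q t
      have hA := halg.left_alt p.1 q.1 t.1
      simp only [biAssoc] at hA
      simp only [biAssoc, Prod.ext_iff, Prod.fst_add, Prod.snd_add, Prod.fst_sub,
        Prod.snd_sub, Prod.fst_zero, Prod.snd_zero, map_add, LinearMap.add_apply]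
      refine ⟨by linear_combination (norm := abel) hA, ?_⟩
      linear_combination (norm := abel) hw p.1 q.1 t.2 + hrep.rep3 p.1 t.1 q.2
        + hrep.rep3 q.1 t.1 p.2 + h3 p.1 q.1 t.1
    · intro p q t
      have hA := halg.right_alt p.1 q.1 t.1
      simp only [biAssoc, ← halg.alpha_beta_comm] at hA
      simp only [biAssoc, Prod.ext_iff, Prod.fst_add, Prod.snd_add, Prod.fst_sub,
        Prod.snd_sub, Prod.fst_zero, Prod.snd_zero, map_add, LinearMap.add_apply,
        ← halg.alpha_beta_comm, ← hrep.phi_psi_comm]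
      refine ⟨by linear_combination (norm := abel) hA, ?_⟩
      linear_combination (norm := abel) (h4 p.1 q.1 t.1) - (hw2' q.1 t.1 p.2)
        - (hrep.rep4 t.1 p.1 q.2) - (hrep.rep4 q.1 p.1 t.2)
end

section
/- Let (A, μ, α, β) be a BiHom-alternative algebra, k, l, s, t ∈ ℕ, D an α^kβ^l-derivation of A and θ an α^sβ^t-centroid of A. Then the commutator [D,θ] = D∘θ − θ∘D is an α^{k+s}β^{l+t}-centroid of A. -/
/-- An `α^k β^l`-derivation of `(A, μ, α, β)`. -/
structure IsDerivation (K : Type*) {A : Type*} [Field K] [AddCommGroup A] [Module K A]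
    (mul : A → A → A) (α β : A → A) (k l : ℕ) (D : A → A) : Prop where
  lin : IsLinearMap K D
  comm_a : ∀ x, D (α x) = α (D x)
  comm_b : ∀ x, D (β x) = β (D x)
  der : ∀ x y, D (mul x y)
      = mul (D x) (α^[k] (β^[l] y)) + mul (α^[k] (β^[l] x)) (D y)

/-- An `α^k β^l`-centroid of `(A, μ, α, β)`. -/
structure IsCentroid (K : Type*) {A : Type*} [Field K] [AddCommGroup A] [Module K A]
    (mul : A → A → A) (α β : A → A) (k l : ℕ) (θ : A → A) : Prop where
  lin : IsLinearMap K θ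
  comm_a : ∀ x, θ (α x) = α (θ x)
  comm_b : ∀ x, θ (β x) = β (θ x)
  cent_l : ∀ x y, θ (mul x y) = mul (θ x) (α^[k] (β^[l] y))
  cent_r : ∀ x y, θ (mul x y) = mul (α^[k] (β^[l] x)) (θ y)

/-- An `α^k β^l`-quasi-centroid of `(A, μ, α, β)`. -/
structure IsQuasiCentroid (K : Type*) {A : Type*} [Field K] [AddCommGroup A] [Module K A]
    (mul : A → A → A) (α β : A → A) (k l : ℕ) (θ : A → A) : Prop where
  lin : IsLinearMap K θ
  comm_a : ∀ x, θ (α x) = α (θ x)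
  comm_b : ∀ x, θ (β x) = β (θ x)
  qc : ∀ x y, mul (θ x) (α^[k] (β^[l] y)) = mul (α^[k] (β^[l] x)) (θ y)

/-- An `α^k β^l`-quasi-derivation of `(A, μ, α, β)`. -/
def IsQuasiDerivation (K : Type*) {A : Type*} [Field K] [AddCommGroup A] [Module K A]
    (mul : A → A → A) (α β : A → A) (k l : ℕ) (D : A → A) : Prop :=
  IsLinearMap K D ∧ (∀ x, D (α x) = α (D x)) ∧ (∀ x, D (β x) = β (D x)) ∧
    ∃ D' : A → A, IsLinearMap K D' ∧ (∀ x, D' (α x) = α (D' x)) ∧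
      (∀ x, D' (β x) = β (D' x)) ∧
      ∀ x y, D' (mul x y)
        = mul (D x) (α^[k] (β^[l] y)) + mul (α^[k] (β^[l] x)) (D y)

/-- An `α^k β^l`-generalized derivation of `(A, μ, α, β)` with associated maps
`D'` and `D''`. -/
structure IsGenDerivation (K : Type*) {A : Type*} [Field K] [AddCommGroup A] [Module K A]
    (mul : A → A → A) (α β : A → A) (k l : ℕ) (D D' D'' : A → A) : Prop where
  lin : IsLinearMap K D
  lin' : IsLinearMap K D'
  lin'' : IsLinearMap K D''
  comm_a : ∀ x, D (α x) = α (D x)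
  comm_b : ∀ x, D (β x) = β (D x)
  comm_a' : ∀ x, D' (α x) = α (D' x)
  comm_b' : ∀ x, D' (β x) = β (D' x)
  comm_a'' : ∀ x, D'' (α x) = α (D'' x)
  comm_b'' : ∀ x, D'' (β x) = β (D'' x)
  gen : ∀ x y, D'' (mul x y)
      = mul (D x) (α^[k] (β^[l] y)) + mul (α^[k] (β^[l] x)) (D' y)


section Helpers
variable {A : Type*}

lemma iter_comm {f g : A → A} (h : ∀ x, f (g x) = g (f x)) :
    ∀ (n : ℕ) (x : A), f (g^[n] x) = g^[n] (f x) := by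
  intro n
  induction n with
  | zero => intro x; simp
  | succ n ih =>
    intro x
    rw [Function.iterate_succ_apply', h, ih]
    exact (Function.iterate_succ_apply' g n (f x)).symm
end Helpers

/-- If `D` is an `α^k β^l`-derivation and `θ` an `α^s β^t`-centroid of a
BiHom-alternative algebra, then `[D,θ] = D∘θ − θ∘D` is an
`α^{k+s} β^{l+t}`-centroid. -/
theorem commutator_derivation_centroid_isCentroid
    (K : Type*) [Field K] [CharZero K] {A : Type*} [AddCommGroup A] [Module K A]
    (mul : A → A → A) (α β : A → A) (halg : IsBiHomAlt K mul α β)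
    (k l s t : ℕ) (D θ : A → A)
    (hD : IsDerivation K mul α β k l D) (hθ : IsCentroid K mul α β s t θ) :
    IsCentroid K mul α β (k + s) (l + t) (fun x => D (θ x) - θ (D x)) := by

  have hab := halg.alpha_beta_comm
  -- commuting facts
  have hDab : ∀ (m n : ℕ) (x : A), D (α^[m] (β^[n] x)) = α^[m] (β^[n] (D x)) := by
    intro m n x
    rw [iter_comm hD.comm_a, iter_comm hD.comm_b]
  have hθab : ∀ (m n : ℕ) (x : A), θ (α^[m] (β^[n] x)) = α^[m] (β^[n] (θ x)) := by
    intro m n x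
    rw [iter_comm hθ.comm_a, iter_comm hθ.comm_b]
  have hiter : ∀ (x : A), α^[k+s] (β^[l+t] x) = α^[k] (β^[l] (α^[s] (β^[t] x))) := by
    intro x
    rw [Function.iterate_add_apply, Function.iterate_add_apply,
      iter_comm (fun x => (iter_comm hab l x).symm) s (β^[t] x)]
  have hiter' : ∀ (x : A), α^[k+s] (β^[l+t] x) = α^[s] (β^[t] (α^[k] (β^[l] x))) := by
    intro x
    rw [Nat.add_comm k s, Nat.add_comm l t, Function.iterate_add_apply,
      Function.iterate_add_apply,
      iter_comm (fun x => (iter_comm hab t x).symm) k (β^[l] x)]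
  constructor
  · constructor
    · intro x y
      simp only [hD.lin.map_add, hθ.lin.map_add]
      abel
    · intro c x
      simp only [hD.lin.map_smul, hθ.lin.map_smul, smul_sub]
  · intro x
    simp only [hD.comm_a, hθ.comm_a, halg.alpha_lin.map_sub]
  · intro x
    simp only [hD.comm_b, hθ.comm_b, halg.beta_lin.map_sub]
  · intro x y
    rw [hθ.cent_l, hD.der, hD.der x y, hθ.lin.map_add, hθ.cent_l (D x),
      hθ.cent_l (α^[k] (β^[l] x)) (D y), hDab, hθab,
      ← hiter y, ← hiter' y, (halg.mul_lin_left _).map_sub]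
    abel
  · intro x y
    rw [hθ.cent_r, hD.der, hD.der x y, hθ.lin.map_add, hθ.cent_r (D x),
      hθ.cent_r _ (D y), hDab, hθab,
      ← hiter x, ← hiter' x, (halg.mul_lin_right _).map_sub]
    abel
end

section
/- Let (A, μ, α, β) be a BiHom-alternative algebra and k, l, s, t ∈ ℕ. If D₁ is an α^kβ^l-generalized derivation of A with associated maps D₁', D₁'' and D₂ is an α^sβ^t-generalized derivation of A with associated maps D₂', D₂'', then the commutator [D₁,D₂] = D₁∘D₂ − D₂∘D₁ is an α^{k+s}β^{l+t}-generalized derivation of A with associated maps [D₁',D₂'] and [D₁'',D₂'']; i.e., [D₁'',D₂''](xy) = [D₁,D₂](x)·α^{k+s}β^{l+t}(y) + α^{k+s}β^{l+t}(x)·[D₁',D₂'](y) for all x, y ∈ A, and [D₁,D₂], [D₁',D₂'], [D₁'',D₂''] all commute with α and β. -/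
/-- If `D₁` is an `α^k β^l`-generalized derivation with associated maps
`D₁', D₁''` and `D₂` an `α^s β^t`-generalized derivation with associated maps
`D₂', D₂''`, then `[D₁,D₂]` is an `α^{k+s} β^{l+t}`-generalized derivation with
associated maps `[D₁',D₂']` and `[D₁'',D₂'']`. -/
theorem commutator_genDerivations_isGenDerivation
    (K : Type*) [Field K] [CharZero K] {A : Type*} [AddCommGroup A] [Module K A]
    (mul : A → A → A) (α β : A → A) (halg : IsBiHomAlt K mul α β)
    (k l s t : ℕ) (D₁ D₁' D₁'' D₂ D₂' D₂'' : A → A)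
    (h1 : IsGenDerivation K mul α β k l D₁ D₁' D₁'')
    (h2 : IsGenDerivation K mul α β s t D₂ D₂' D₂'') :
    IsGenDerivation K mul α β (k + s) (l + t)
      (fun x => D₁ (D₂ x) - D₂ (D₁ x))
      (fun x => D₁' (D₂' x) - D₂' (D₁' x))
      (fun x => D₁'' (D₂'' x) - D₂'' (D₁'' x)) := by
  -- helper: commuting with a map extends to iterates
  have comm_iter : ∀ (D g : A → A), (∀ x, D (g x) = g (D x)) →
      ∀ (n : ℕ) (x : A), D (g^[n] x) = g^[n] (D x) := by
    intro D g h n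
    induction n with
    | zero => intro x; simp
    | succ n ih =>
      intro x
      rw [Function.iterate_succ_apply', h, ih, Function.iterate_succ_apply']
  have amul : ∀ (n : ℕ) (x y : A), α^[n] (mul x y) = mul (α^[n] x) (α^[n] y) := by
    intro n
    induction n with
    | zero => intro x y; simp
    | succ n ih =>
      intro x y
      simp only [Function.iterate_succ_apply', ih, halg.alpha_mul]
  have bmul : ∀ (n : ℕ) (x y : A), β^[n] (mul x y) = mul (β^[n] x) (β^[n] y) := by
    intro n
    induction n with
    | zero => intro x y; simp
    | succ n ih =>
      intro x y
      simp only [Function.iterate_succ_apply', ih, halg.beta_mul]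
  set φ : A → A := fun x => α^[k] (β^[l] x) with hφ
  set ψ : A → A := fun x => α^[s] (β^[t] x) with hψ
  have hba : ∀ (n : ℕ) (x : A), β^[n] (α x) = α (β^[n] x) := by
    intro n x
    exact (comm_iter α β halg.alpha_beta_comm n x).symm
  have hgen : ∀ (a b c d : ℕ) (x : A),
      α^[a] (β^[b] (α^[c] (β^[d] x))) = α^[a+c] (β^[b+d] x) := by
    intro a b c d x
    rw [comm_iter (β^[b]) α (hba b) c, ← Function.iterate_add_apply α a c,
      ← Function.iterate_add_apply β b d]
  have hφψ : ∀ x, φ (ψ x) = α^[k+s] (β^[l+t] x) := fun x => hgen k l s t x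
  have hφmul : ∀ x y, φ (mul x y) = mul (φ x) (φ y) := by
    intro x y; simp only [hφ, bmul, amul]
  have hψmul : ∀ x y, ψ (mul x y) = mul (ψ x) (ψ y) := by
    intro x y; simp only [hψ, bmul, amul]
  -- commutation of the various maps with φ and ψ
  have commφ : ∀ (D : A → A), (∀ x, D (α x) = α (D x)) → (∀ x, D (β x) = β (D x)) →
      ∀ x, D (φ x) = φ (D x) := by
    intro D ha hb x
    simp only [hφ]
    rw [comm_iter D α ha, comm_iter D β hb]
  have commψ : ∀ (D : A → A), (∀ x, D (α x) = α (D x)) → (∀ x, D (β x) = β (D x)) →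
      ∀ x, D (ψ x) = ψ (D x) := by
    intro D ha hb x
    simp only [hψ]
    rw [comm_iter D α ha, comm_iter D β hb]
  constructor
  · exact ⟨fun x y => by simp [h1.lin.map_add, h2.lin.map_add]; abel,
      fun c x => by simp [h1.lin.map_smul, h2.lin.map_smul, smul_sub]⟩
  · exact ⟨fun x y => by simp [h1.lin'.map_add, h2.lin'.map_add]; abel,
      fun c x => by simp [h1.lin'.map_smul, h2.lin'.map_smul, smul_sub]⟩
  · exact ⟨fun x y => by simp [h1.lin''.map_add, h2.lin''.map_add]; abel,
      fun c x => by simp [h1.lin''.map_smul, h2.lin''.map_smul, smul_sub]⟩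
  · intro x; simp [h1.comm_a, h2.comm_a, halg.alpha_lin.map_sub]
  · intro x; simp [h1.comm_b, h2.comm_b, halg.beta_lin.map_sub]
  · intro x; simp [h1.comm_a', h2.comm_a', halg.alpha_lin.map_sub]
  · intro x; simp [h1.comm_b', h2.comm_b', halg.beta_lin.map_sub]
  · intro x; simp [h1.comm_a'', h2.comm_a'', halg.alpha_lin.map_sub]
  · intro x; simp [h1.comm_b'', h2.comm_b'', halg.beta_lin.map_sub]
  · intro x y
    have e1 : D₁'' (D₂'' (mul x y))
        = mul (D₁ (D₂ x)) (φ (ψ y)) + mul (φ (D₂ x)) (D₁' (ψ y))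
          + (mul (D₁ (ψ x)) (φ (D₂' y)) + mul (φ (ψ x)) (D₁' (D₂' y))) := by
      rw [h2.gen, h1.lin''.map_add, h1.gen, h1.gen]
    have e2 : D₂'' (D₁'' (mul x y))
        = mul (D₂ (D₁ x)) (ψ (φ y)) + mul (ψ (D₁ x)) (D₂' (φ y))
          + (mul (D₂ (φ x)) (ψ (D₁' y)) + mul (ψ (φ x)) (D₂' (D₁' y))) := by
      rw [h1.gen, h2.lin''.map_add, h2.gen, h2.gen]
    have hψφ : ∀ x, ψ (φ x) = φ (ψ x) := by
      intro x
      show α^[s] (β^[t] (α^[k] (β^[l] x))) = φ (ψ x)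
      rw [hgen s t k l, hφψ, Nat.add_comm s k, Nat.add_comm t l]
    rw [e1, e2]
    rw [commψ D₁ h1.comm_a h1.comm_b, commφ D₂ h2.comm_a h2.comm_b,
      commψ D₁' h1.comm_a' h1.comm_b', commφ D₂' h2.comm_a' h2.comm_b']
    simp only [hψφ, hφψ]
    have lsub : ∀ a b c : A, mul (a - b) c = mul a c - mul b c := by
      intro a b c; exact (halg.mul_lin_left c).map_sub a b
    have rsub : ∀ a b c : A, mul a (b - c) = mul a b - mul a c := by
      intro a b c; exact (halg.mul_lin_right a).map_sub b c
    rw [lsub, rsub]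
    abel
end

section
/- Let (A, μ, α, β) be a BiHom-alternative algebra and k, l ∈ ℕ. Then the symmetric α^kβ^l-generalized derivations of A are exactly the sums of α^kβ^l-quasi-derivations and α^kβ^l-quasi-centroids: (i) if D is a symmetric α^kβ^l-generalized derivation with associated maps D', D'', then (D+D')/2 is an α^kβ^l-quasi-derivation, (D−D')/2 is an α^kβ^l-quasi-centroid, and D = (D+D')/2 + (D−D')/2; (ii) conversely, if D₁ is an α^kβ^l-quasi-derivation and D₂ is an α^kβ^l-quasi-centroid, then D₁ + D₂ is a symmetric α^kβ^l-generalized derivation. -/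
/-- A symmetric `α^k β^l`-generalized derivation of `(A, μ, α, β)`. -/
def IsSymGenDerivation (K : Type*) {A : Type*} [Field K] [AddCommGroup A] [Module K A]
    (mul : A → A → A) (α β : A → A) (k l : ℕ) (D : A → A) : Prop :=
  IsLinearMap K D ∧ (∀ x, D (α x) = α (D x)) ∧ (∀ x, D (β x) = β (D x)) ∧
    ∃ D' D'' : A → A,
      IsLinearMap K D' ∧ (∀ x, D' (α x) = α (D' x)) ∧ (∀ x, D' (β x) = β (D' x)) ∧
      IsLinearMap K D'' ∧ (∀ x, D'' (α x) = α (D'' x)) ∧ (∀ x, D'' (β x) = β (D'' x)) ∧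
      (∀ x y, D'' (mul x y)
          = mul (D x) (α^[k] (β^[l] y)) + mul (α^[k] (β^[l] x)) (D' y)) ∧
      (∀ x y, D'' (mul x y)
          = mul (D' x) (α^[k] (β^[l] y)) + mul (α^[k] (β^[l] x)) (D y))

/-- The symmetric `α^k β^l`-generalized derivations are exactly the sums of
`α^k β^l`-quasi-derivations and `α^k β^l`-quasi-centroids:
`SGDer(A) = QDer(A) + QC(A)`. -/
theorem symGenDerivation_eq_quasiDerivation_add_quasiCentroid
    (K : Type*) [Field K] [CharZero K] {A : Type*} [AddCommGroup A] [Module K A]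
    (mul : A → A → A) (α β : A → A) (halg : IsBiHomAlt K mul α β) (k l : ℕ) :
    (∀ D D' D'' : A → A,
      IsLinearMap K D → (∀ x, D (α x) = α (D x)) → (∀ x, D (β x) = β (D x)) →
      IsLinearMap K D' → (∀ x, D' (α x) = α (D' x)) → (∀ x, D' (β x) = β (D' x)) →
      IsLinearMap K D'' → (∀ x, D'' (α x) = α (D'' x)) → (∀ x, D'' (β x) = β (D'' x)) →
      (∀ x y, D'' (mul x y)
          = mul (D x) (α^[k] (β^[l] y)) + mul (α^[k] (β^[l] x)) (D' y)) →
      (∀ x y, D'' (mul x y)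
          = mul (D' x) (α^[k] (β^[l] y)) + mul (α^[k] (β^[l] x)) (D y)) →
      IsQuasiDerivation K mul α β k l (fun x => (2 : K)⁻¹ • (D x + D' x)) ∧
      IsQuasiCentroid K mul α β k l (fun x => (2 : K)⁻¹ • (D x - D' x)) ∧
      (∀ x, D x = (2 : K)⁻¹ • (D x + D' x) + (2 : K)⁻¹ • (D x - D' x))) ∧
    (∀ D₁ D₂ : A → A, IsQuasiDerivation K mul α β k l D₁ →
      IsQuasiCentroid K mul α β k l D₂ →
      IsSymGenDerivation K mul α β k l (fun x => D₁ x + D₂ x)) := by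

  have h2 : ((2 : K)⁻¹ + (2 : K)⁻¹) = 1 := by norm_num
  have half2 : ∀ a : A, (2 : K)⁻¹ • (a + a) = a := by
    intro a
    rw [← two_smul K a, smul_smul]
    norm_num
  have αlin := halg.alpha_lin
  have βlin := halg.beta_lin
  constructor
  · intro D D' D'' hD ha hb hD' ha' hb' hD'' ha'' hb'' g1 g2
    have hlin1 : IsLinearMap K fun x => (2 : K)⁻¹ • (D x + D' x) := by
      constructor
      · intro a b; rw [hD.map_add, hD'.map_add, ← smul_add]
        congr 1; abel
      · intro c a; rw [hD.map_smul, hD'.map_smul, ← smul_add, smul_comm]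
    have hlin2 : IsLinearMap K fun x => (2 : K)⁻¹ • (D x - D' x) := by
      constructor
      · intro a b; rw [hD.map_add, hD'.map_add, ← smul_add]
        congr 1; abel
      · intro c a; rw [hD.map_smul, hD'.map_smul, ← smul_sub, smul_comm]
    have ca1 : ∀ x, (2 : K)⁻¹ • (D (α x) + D' (α x)) = α ((2 : K)⁻¹ • (D x + D' x)) := by
      intro x; rw [ha, ha', αlin.map_smul, αlin.map_add]
    have cb1 : ∀ x, (2 : K)⁻¹ • (D (β x) + D' (β x)) = β ((2 : K)⁻¹ • (D x + D' x)) := by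
      intro x; rw [hb, hb', βlin.map_smul, βlin.map_add]
    have ca2 : ∀ x, (2 : K)⁻¹ • (D (α x) - D' (α x)) = α ((2 : K)⁻¹ • (D x - D' x)) := by
      intro x; rw [ha, ha', αlin.map_smul, αlin.map_sub]
    have cb2 : ∀ x, (2 : K)⁻¹ • (D (β x) - D' (β x)) = β ((2 : K)⁻¹ • (D x - D' x)) := by
      intro x; rw [hb, hb', βlin.map_smul, βlin.map_sub]
    refine ⟨⟨hlin1, ca1, cb1, D'', hD'', ha'', hb'', ?_⟩, ⟨hlin2, ca2, cb2, ?_⟩, ?_⟩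
    · intro x y
      have : mul ((2 : K)⁻¹ • (D x + D' x)) (α^[k] (β^[l] y))
            + mul (α^[k] (β^[l] x)) ((2 : K)⁻¹ • (D y + D' y))
          = (2 : K)⁻¹ • (D'' (mul x y) + D'' (mul x y)) := by
        rw [(halg.mul_lin_left _).map_smul, (halg.mul_lin_right _).map_smul, ← smul_add,
          (halg.mul_lin_left _).map_add, (halg.mul_lin_right _).map_add]
        congr 1
        nth_rewrite 1 [g1 x y]
        rw [g2 x y]; abel
      rw [this, half2]
    · intro x y
      have key : mul (D x) (α^[k] (β^[l] y)) - mul (D' x) (α^[k] (β^[l] y))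
          = mul (α^[k] (β^[l] x)) (D y) - mul (α^[k] (β^[l] x)) (D' y) := by
        have h := (g1 x y).symm.trans (g2 x y)
        rw [sub_eq_sub_iff_add_eq_add, h]
        abel
      rw [(halg.mul_lin_left _).map_smul, (halg.mul_lin_right _).map_smul,
        (halg.mul_lin_left _).map_sub, (halg.mul_lin_right _).map_sub, key]
    · intro x
      rw [← smul_add]
      have : D x + D' x + (D x - D' x) = D x + D x := by abel
      rw [this, half2]
  · rintro D₁ D₂ ⟨h1lin, h1a, h1b, E, hElin, hEa, hEb, hE⟩ ⟨h2lin, h2a, h2b, hqc⟩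
    refine ⟨⟨fun a b => by rw [h1lin.map_add, h2lin.map_add]; abel,
             fun c a => by rw [h1lin.map_smul, h2lin.map_smul, ← smul_add]⟩,
            fun x => show D₁ (α x) + D₂ (α x) = α (D₁ x + D₂ x) by
              rw [h1a, h2a, αlin.map_add],
            fun x => show D₁ (β x) + D₂ (β x) = β (D₁ x + D₂ x) by
              rw [h1b, h2b, βlin.map_add],
            fun x => D₁ x - D₂ x, E,
            ⟨fun a b => by rw [h1lin.map_add, h2lin.map_add]; abel,
             fun c a => by rw [h1lin.map_smul, h2lin.map_smul, ← smul_sub]⟩,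
            fun x => show D₁ (α x) - D₂ (α x) = α (D₁ x - D₂ x) by
              rw [h1a, h2a, αlin.map_sub],
            fun x => show D₁ (β x) - D₂ (β x) = β (D₁ x - D₂ x) by
              rw [h1b, h2b, βlin.map_sub],
            hElin, hEa, hEb, ?_, ?_⟩
    · intro x y
      show E (mul x y) = mul (D₁ x + D₂ x) (α^[k] (β^[l] y))
          + mul (α^[k] (β^[l] x)) (D₁ y - D₂ y)
      rw [hE x y, (halg.mul_lin_left _).map_add, (halg.mul_lin_right _).map_sub,
        hqc x y]
      abel
    · intro x y
      show E (mul x y) = mul (D₁ x - D₂ x) (α^[k] (β^[l] y))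
          + mul (α^[k] (β^[l] x)) (D₁ y + D₂ y)
      rw [hE x y, (halg.mul_lin_left _).map_sub, (halg.mul_lin_right _).map_add,
        hqc x y]
      abel
end
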